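/- arXiv:2411.06900 — 8 statements merged into one kernel-verified Lean document; each statement's English description precedes it below -/
import Mathlib

section
/- Let Γ be a finite graph on n ≥ 2 vertices without isolated vertices, and Ω a graph with a designated root v and |V(Ω)| ≥ 2. Then the domination number of the rooted product satisfies γ(Γ ∘_v Ω) ∈ {n·γ(Ω), n·γ(Ω) − n + γ(Γ)}. -/
open SimpleGraph

variable {V : Type*}

/-- `D` is a dominating set of `G`: every vertex is in `D` or adjacent to a vertex of `D`. -/
def IsDominating (G : SimpleGraph V) (D : Set V) : Prop :=
  ∀ u : V, u ∈ D ∨ ∃ d ∈ D, G.Adj u d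

/-- `D` is a total dominating set of `G`: every vertex has a neighbor in `D`. -/
def IsTotalDominating (G : SimpleGraph V) (D : Set V) : Prop :=
  ∀ u : V, ∃ d ∈ D, G.Adj u d

/-- `R` is a resolving set of `G`. -/
def IsResolving (G : SimpleGraph V) (R : Set V) : Prop :=
  ∀ u v : V, u ≠ v → ∃ r ∈ R, G.dist u r ≠ G.dist v r

/-- `D` is an independent set of `G`. -/
def IsIndependentSet (G : SimpleGraph V) (D : Set V) : Prop :=
  ∀ u ∈ D, ∀ v ∈ D, ¬ G.Adj u v

/-- the subgraph of `G` induced by `D` is connected. -/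
def InducedConnected (G : SimpleGraph V) (D : Set V) : Prop :=
  (G.induce D).Connected

/-- closed neighborhood -/
def closedNbhd (G : SimpleGraph V) (u : V) : Set V :=
  insert u (G.neighborSet u)

/-- `D` is a double dominating set of `G`: `|N[u] ∩ D| ≥ 2` for every vertex `u`. -/
def IsDoubleDominating (G : SimpleGraph V) (D : Set V) : Prop :=
  ∀ u : V, 2 ≤ (closedNbhd G u ∩ D).ncard

/-- `D` is a 2-dominating set of `G`: every vertex outside `D` has ≥ 2 neighbors in `D`. -/
def IsTwoDominating (G : SimpleGraph V) (D : Set V) : Prop :=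
  ∀ u : V, u ∉ D → 2 ≤ (G.neighborSet u ∩ D).ncard

/-- minimum cardinality of a set of vertices satisfying `P`. -/
noncomputable def minCard (P : Set V → Prop) : ℕ :=
  sInf {n : ℕ | ∃ D : Set V, P D ∧ D.ncard = n}

noncomputable def gamma (G : SimpleGraph V) : ℕ := minCard (IsDominating G)
noncomputable def gammaT (G : SimpleGraph V) : ℕ := minCard (IsTotalDominating G)
noncomputable def gammaC (G : SimpleGraph V) : ℕ :=
  minCard (fun D => IsDominating G D ∧ InducedConnected G D)
noncomputable def gammaI (G : SimpleGraph V) : ℕ :=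
  minCard (fun D => IsDominating G D ∧ IsIndependentSet G D)
noncomputable def gammaX2 (G : SimpleGraph V) : ℕ := minCard (IsDoubleDominating G)
noncomputable def gamma2 (G : SimpleGraph V) : ℕ := minCard (IsTwoDominating G)
noncomputable def mdim (G : SimpleGraph V) : ℕ := minCard (IsResolving G)
noncomputable def gammaR (G : SimpleGraph V) : ℕ :=
  minCard (fun D => IsDominating G D ∧ IsResolving G D)
noncomputable def gammaRI (G : SimpleGraph V) : ℕ :=
  minCard (fun D => IsDominating G D ∧ IsIndependentSet G D ∧ IsResolving G D)
noncomputable def gammaRT (G : SimpleGraph V) : ℕ :=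
  minCard (fun D => IsTotalDominating G D ∧ IsResolving G D)
noncomputable def gammaRC (G : SimpleGraph V) : ℕ :=
  minCard (fun D => IsDominating G D ∧ InducedConnected G D ∧ IsResolving G D)

/-- `u` and `v` are twins: `N(u) = N(v)` or `N[u] = N[v]`. -/
def AreTwins (G : SimpleGraph V) (u v : V) : Prop :=
  G.neighborSet u = G.neighborSet v ∨ closedNbhd G u = closedNbhd G v

/-- The rooted product `Γ ∘_v Ω`: a copy of `Ω` is attached at its root `v`
to every vertex of `Γ`. -/
def rootedProduct {α β : Type*} (Γ : SimpleGraph α) (Ω : SimpleGraph β) (v : β) :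
    SimpleGraph (α × β) where
  Adj p q := (p.2 = v ∧ q.2 = v ∧ Γ.Adj p.1 q.1) ∨ (p.1 = q.1 ∧ Ω.Adj p.2 q.2)
  symm := by
    constructor
    intro p q h
    rcases h with ⟨h1, h2, h3⟩ | ⟨h1, h2⟩
    · exact Or.inl ⟨h2, h1, h3.symm⟩
    · exact Or.inr ⟨h1.symm, h2.symm⟩
  loopless := by
    constructor
    intro p h
    rcases h with ⟨_, _, h⟩ | ⟨_, h⟩ <;> exact h.ne rfl

/-- Vertex type of the fractal cubic network `FCN l`. -/
def FCNVert : ℕ → Type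
  | 0 => Fin 4
  | (l + 1) => Fin 4 × FCNVert l

/-- Auxiliary vertex `(01)^{l+1}` of `FCN l` (labels `00,01,11,10` ↦ `0,1,2,3`). -/
def fcnAux : (l : ℕ) → FCNVert l
  | 0 => ((1 : Fin 4) : FCNVert 0)
  | (l + 1) => (((1 : Fin 4), fcnAux l) : FCNVert (l + 1))

/-- The designated root `10(01)^l` of `FCN l`. -/
def fcnRoot : (l : ℕ) → FCNVert l
  | 0 => ((3 : Fin 4) : FCNVert 0)
  | (l + 1) => (((3 : Fin 4), fcnAux l) : FCNVert (l + 1))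

/-- The fractal cubic network: `FCN 0 = C₄` and
`FCN (l+1) = C₄ ∘_v FCN l`, rooted at the designated root of `FCN l`. -/
def FCN : (l : ℕ) → SimpleGraph (FCNVert l)
  | 0 => cycleGraph 4
  | (l + 1) => rootedProduct (cycleGraph 4) (FCN l) (fcnRoot l)


lemma minCard_le {P : Set V → Prop} {D : Set V} (h : P D) :
    minCard P ≤ D.ncard := Nat.sInf_le ⟨D, h, rfl⟩

lemma minCard_exists {P : Set V → Prop} (h : ∃ D, P D) :
    ∃ D, P D ∧ D.ncard = minCard P := by
  obtain ⟨D, hD⟩ := h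
  have : minCard P ∈ {n : ℕ | ∃ D : Set V, P D ∧ D.ncard = n} :=
    Nat.sInf_mem ⟨D.ncard, D, hD, rfl⟩
  exact this

open Finset in
lemma ncard_sum_fibers {α β : Type*} [Fintype α] [Fintype β] (D : Set (α × β)) :
    D.ncard = ∑ i : α, {b | (i, b) ∈ D}.ncard := by
  classical
  rw [Set.ncard_eq_toFinset_card']
  rw [Finset.card_eq_sum_card_fiberwise (f := Prod.fst) (t := Finset.univ)
    (fun x _ => Finset.mem_univ _)]
  refine Finset.sum_congr rfl fun i _ => ?_
  rw [Set.ncard_eq_toFinset_card']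
  apply Finset.card_nbij (fun p => p.2)
  · intro p hp
    simp at hp ⊢
    rw [← hp.2]; exact hp.1
  · intro p hp q hq h
    simp at hp hq
    ext
    · rw [hp.2, hq.2]
    · exact h
  · intro b hb
    simpa using hb


lemma gamma_exists {V : Type*} [Fintype V] (G : SimpleGraph V) :
    ∃ D, IsDominating G D ∧ D.ncard = gamma G :=
  minCard_exists ⟨Set.univ, fun u => Or.inl (Set.mem_univ u)⟩

lemma one_le_gamma {V : Type*} [Fintype V] [Nonempty V] (G : SimpleGraph V) :
    1 ≤ gamma G := by
  obtain ⟨D, hD, hc⟩ := gamma_exists G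
  rw [← hc]
  have hne : D.Nonempty := by
    rcases hD (Classical.arbitrary V) with h | ⟨d, hd, _⟩
    · exact ⟨_, h⟩
    · exact ⟨d, hd⟩
  exact (Set.ncard_pos (Set.toFinite D)).2 hne

theorem stmt7 {α β : Type*} [Fintype α] [Fintype β]
    (Γ : SimpleGraph α) (Ω : SimpleGraph β) (v : β)
    (hn : 2 ≤ Fintype.card α) (hiso : ∀ a : α, ∃ b : α, Γ.Adj a b)
    (hΩ : 2 ≤ Fintype.card β) :
    gamma (rootedProduct Γ Ω v) ∈
      ({Fintype.card α * gamma Ω,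
        Fintype.card α * gamma Ω - Fintype.card α + gamma Γ} : Set ℕ) := by
  classical
  have hαne : Nonempty α := Fintype.card_pos_iff.mp (by omega)
  have hβne : Nonempty β := Fintype.card_pos_iff.mp (by omega)
  set n := Fintype.card α with hn'
  set G := rootedProduct Γ Ω v with hG
  have hγΩ1 : 1 ≤ gamma Ω := one_le_gamma Ω
  obtain ⟨QΩ, hQΩ, hQΩc⟩ := gamma_exists Ω
  -- upper bound: gamma G ≤ n * gamma Ω
  have hub : gamma G ≤ n * gamma Ω := by
    have hdom : IsDominating G {p : α × β | p.2 ∈ QΩ} := by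
      intro p
      rcases hQΩ p.2 with h | ⟨d, hd, hadj⟩
      · exact Or.inl h
      · exact Or.inr ⟨(p.1, d), hd, Or.inr ⟨rfl, hadj⟩⟩
    calc gamma G ≤ ({p : α × β | p.2 ∈ QΩ}).ncard := minCard_le hdom
      _ = n * gamma Ω := by
          rw [ncard_sum_fibers]
          have : ∀ i : α, {b | (i, b) ∈ {p : α × β | p.2 ∈ QΩ}}.ncard = gamma Ω := by
            intro i
            have h1 : {b | (i, b) ∈ {p : α × β | p.2 ∈ QΩ}} = QΩ := rfl
            rw [h1, hQΩc]
          simp only [this, Finset.sum_const, Finset.card_univ, smul_eq_mul]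
          rfl
  -- partial domination predicate
  set P' : Set β → Prop := fun Q => ∀ b : β, b ≠ v → b ∈ Q ∨ ∃ d ∈ Q, Ω.Adj b d with hP'
  have hm_le : minCard P' ≤ gamma Ω :=
    le_of_le_of_eq (minCard_le (P := P') (D := QΩ) (fun b _ => hQΩ b)) hQΩc
  -- inserting v into a partial dominating set gives a dominating set
  have hins : ∀ Q : Set β, P' Q → gamma Ω ≤ Q.ncard + 1 := by
    intro Q hQ
    have hdom : IsDominating Ω (insert v Q) := by
      intro b
      by_cases hbv : b = v
      · exact Or.inl (hbv ▸ Set.mem_insert v Q)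
      · rcases hQ b hbv with h | ⟨d, hd, hadj⟩
        · exact Or.inl (Set.mem_insert_of_mem _ h)
        · exact Or.inr ⟨d, Set.mem_insert_of_mem _ hd, hadj⟩
    exact le_trans (minCard_le hdom) (Set.ncard_insert_le v Q)
  -- a minimum dominating set of G and its fibers
  obtain ⟨D, hD, hDc⟩ := gamma_exists G
  have hfibP : ∀ i : α, P' {b | (i, b) ∈ D} := by
    intro i b hbv
    rcases hD (i, b) with h | ⟨⟨j, c⟩, hd, hadj⟩
    · exact Or.inl h
    · rcases hadj with ⟨h1, h2, h3⟩ | ⟨h1, h2⟩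
      · exact absurd h1 hbv
      · exact Or.inr ⟨c, by rw [show i = j from h1]; exact hd, h2⟩
  simp only [Set.mem_insert_iff, Set.mem_singleton_iff]
  rcases lt_or_eq_of_le hm_le with hlt | heq
  · -- case m < gamma Ω : gamma G = n * gamma Ω - n + gamma Γ
    right
    obtain ⟨Q, hQ, hQc⟩ := minCard_exists (P := P')
      ⟨Set.univ, fun b _ => Or.inl (Set.mem_univ b)⟩
    have hQlt : Q.ncard < gamma Ω := lt_of_le_of_lt (le_of_eq hQc) hlt
    have hEq : gamma Ω = Q.ncard + 1 := le_antisymm (hins Q hQ) hQlt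
    have hvQ : v ∉ Q ∧ ∀ d ∈ Q, ¬ Ω.Adj v d := by
      have hnd : ¬ (v ∈ Q ∨ ∃ d ∈ Q, Ω.Adj v d) := by
        intro h
        have hdom : IsDominating Ω Q := by
          intro b
          by_cases hbv : b = v
          · subst hbv
            rcases h with h | ⟨c, hc, hadj⟩
            · exact Or.inl h
            · exact Or.inr ⟨c, hc, hadj⟩
          · exact hQ b hbv
        have h2 : gamma Ω ≤ Q.ncard := minCard_le hdom
        omega
      push_neg at hnd
      exact hnd
    obtain ⟨S, hS, hSc⟩ := gamma_exists Γ
    -- upper bound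
    set D2 : Set (α × β) := {p | p.2 ∈ Q ∨ (p.1 ∈ S ∧ p.2 = v)} with hD2
    have hD2dom : IsDominating G D2 := by
      rintro ⟨i, b⟩
      by_cases hbv : b = v
      · by_cases hiS : i ∈ S
        · exact Or.inl (Or.inr ⟨hiS, hbv⟩)
        · rcases hS i with h | ⟨j, hjS, hadj⟩
          · exact absurd h hiS
          · exact Or.inr ⟨(j, v), Or.inr ⟨hjS, rfl⟩, Or.inl ⟨hbv, rfl, hadj⟩⟩
      · rcases hQ b hbv with h | ⟨d, hd, hadj⟩
        · exact Or.inl (Or.inl h)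
        · exact Or.inr ⟨(i, d), Or.inl hd, Or.inr ⟨rfl, hadj⟩⟩
    have hfib2 : ∀ i : α, {b | (i, b) ∈ D2}.ncard
        = Q.ncard + (if i ∈ S then 1 else 0) := by
      intro i
      by_cases hiS : i ∈ S
      · have h1 : {b | (i, b) ∈ D2} = insert v Q := by
          ext b
          simp only [hD2, Set.mem_setOf_eq, Set.mem_insert_iff, hiS, true_and]
          tauto
        rw [h1, Set.ncard_insert_of_notMem hvQ.1 (Set.toFinite Q), if_pos hiS]
      · have h1 : {b | (i, b) ∈ D2} = Q := by
          ext b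
          simp only [hD2, Set.mem_setOf_eq, hiS, false_and, or_false]
        rw [h1, if_neg hiS, add_zero]
    have hsum_ite : ∑ i : α, (if i ∈ S then 1 else 0) = gamma Γ := by
      rw [← hSc, Set.ncard_eq_toFinset_card', ← Finset.card_filter]
      congr 1
      ext i
      simp
    have hD2c : D2.ncard = n * Q.ncard + gamma Γ := by
      rw [ncard_sum_fibers]
      simp only [hfib2]
      rw [Finset.sum_add_distrib, Finset.sum_const, Finset.card_univ, smul_eq_mul,
        hsum_ite]
    have hub2 : gamma G ≤ n * Q.ncard + gamma Γ := hD2c ▸ minCard_le hD2dom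
    -- lower bound
    set A : Finset α := Finset.univ.filter (fun i => {b | (i, b) ∈ D}.ncard < gamma Ω)
      with hA
    have hAmem : ∀ i : α, i ∈ A ↔ {b | (i, b) ∈ D}.ncard < gamma Ω := by
      intro i; simp [hA]
    have hroot : ∀ i ∈ A, (i, v) ∉ D ∧ ∀ c, (i, c) ∈ D → ¬ Ω.Adj v c := by
      intro i hi
      have hnd : ¬ ((i, v) ∈ D ∨ ∃ c, (i, c) ∈ D ∧ Ω.Adj v c) := by
        intro h
        have hdom : IsDominating Ω {b | (i, b) ∈ D} := by
          intro b
          by_cases hbv : b = v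
          · subst hbv
            rcases h with h | ⟨c, hc, hadj⟩
            · exact Or.inl h
            · exact Or.inr ⟨c, hc, hadj⟩
          · exact hfibP i b hbv
        have h2 : gamma Ω ≤ {b | (i, b) ∈ D}.ncard := minCard_le hdom
        have h3 := (hAmem i).1 hi
        omega
      push_neg at hnd
      exact hnd
    have hS' : IsDominating Γ (↑(Aᶜ) : Set α) := by
      intro i
      by_cases hiA : i ∈ A
      · rcases hD (i, v) with h | ⟨⟨j, c⟩, hd, hadj⟩
        · exact absurd h (hroot i hiA).1
        · rcases hadj with ⟨h1, h2, h3⟩ | ⟨h1, h2⟩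
          · refine Or.inr ⟨j, ?_, h3⟩
            simp only [Finset.coe_compl, Set.mem_compl_iff, Finset.mem_coe]
            intro hjA
            exact (hroot j hjA).1 (by rw [show c = v from h2] at hd; exact hd)
          · exact absurd h2 ((hroot i hiA).2 c (by rw [show (i:α) = j from h1]; exact hd))
      · exact Or.inl (by simp [hiA])
    have hγΓA : gamma Γ ≤ n - A.card := by
      have h1 := minCard_le hS'
      rwa [Set.ncard_coe_finset, Finset.card_compl] at h1
    have hAcard : A.card ≤ n := by
      simpa using Finset.card_le_univ A
    have key : n * gamma Ω ≤ gamma G + A.card := by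
      have h1 : ∀ i : α, gamma Ω ≤ {b | (i, b) ∈ D}.ncard + (if i ∈ A then 1 else 0) := by
        intro i
        by_cases hiA : i ∈ A
        · have := hins _ (hfibP i)
          rw [if_pos hiA]
          omega
        · have := (hAmem i).not.1 hiA
          rw [if_neg hiA]
          omega
      calc n * gamma Ω = ∑ _i : α, gamma Ω := by
            rw [Finset.sum_const, Finset.card_univ, smul_eq_mul]
        _ ≤ ∑ i : α, ({b | (i, b) ∈ D}.ncard + (if i ∈ A then 1 else 0)) :=
            Finset.sum_le_sum (fun i _ => h1 i)
        _ = gamma G + A.card := by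
            rw [Finset.sum_add_distrib, ← ncard_sum_fibers, hDc]
            congr 1
            rw [Finset.sum_ite_mem, Finset.univ_inter, Finset.sum_const, smul_eq_mul,
              mul_one]
    have hmul : n * gamma Ω = n * Q.ncard + n := by
      rw [hEq]; ring
    omega
  · -- case m = gamma Ω : gamma G = n * gamma Ω
    left
    have hlb : n * gamma Ω ≤ gamma G := by
      rw [← hDc, ncard_sum_fibers]
      calc n * gamma Ω = ∑ _i : α, gamma Ω := by
            rw [Finset.sum_const, Finset.card_univ, smul_eq_mul]
        _ ≤ ∑ i : α, {b | (i, b) ∈ D}.ncard :=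
            Finset.sum_le_sum (fun i _ => heq ▸ minCard_le (hfibP i))
    omega
end

section
/- Let Γ and Ω be graphs without isolated vertices, with Γ having n vertices, and let v ∈ V(Ω). Then the total domination number of the rooted product satisfies γ_t(Γ ∘_v Ω) ∈ {n·γ_t(Ω) − n, γ(Γ) + n·γ_t(Ω) − n, γ_t(Γ) + n·γ_t(Ω) − n, n·γ_t(Ω)}. -/
open SimpleGraph

variable {V : Type*}

lemma stmt8_mul_pred (n t : ℕ) : n * (t - 1) = n * t - n := by
  cases t with
  | zero => simp
  | succ e => rw [Nat.succ_sub_one, Nat.mul_succ]; omega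

lemma stmt8_arith (n d t : ℕ) (hd : d ≤ n) (ht : 1 ≤ t) :
    d * t + (n - d) * (t - 1) = n * (t - 1) + d := by
  obtain ⟨e, rfl⟩ : ∃ e, t = e + 1 := ⟨t - 1, by omega⟩
  obtain ⟨m, rfl⟩ : ∃ m, n = d + m := ⟨n - d, by omega⟩
  simp only [Nat.add_sub_cancel_left, Nat.add_sub_cancel]
  ring

section stmt8Aux

lemma stmt8_minCard_le {V : Type*} {P : Set V → Prop} {D : Set V} (h : P D) :
    minCard P ≤ D.ncard :=
  Nat.sInf_le ⟨D, h, rfl⟩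

lemma stmt8_minCard_exists {V : Type*} {P : Set V → Prop} (h : ∃ D, P D) :
    ∃ D, P D ∧ D.ncard = minCard P := by
  obtain ⟨D, hD⟩ := h
  have hne : {n : ℕ | ∃ D : Set V, P D ∧ D.ncard = n}.Nonempty := ⟨D.ncard, D, hD, rfl⟩
  obtain ⟨D', hD', hc⟩ := Nat.sInf_mem hne
  exact ⟨D', hD', hc⟩

lemma stmt8_ncard_fiber_sum {α β : Type*} [Fintype α] [Fintype β] (S : Set (α × β)) :
    S.ncard = ∑ a : α, {b : β | (a, b) ∈ S}.ncard := by
  classical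
  rw [Set.ncard_eq_toFinset_card' S,
    Finset.card_eq_sum_card_fiberwise (f := Prod.fst) (t := Finset.univ)
      (fun p _ => Finset.mem_univ _)]
  refine Finset.sum_congr rfl fun a _ => ?_
  rw [Set.ncard_eq_toFinset_card']
  refine Finset.card_bij (fun p _ => p.2) ?_ ?_ ?_
  · intro p hp
    simp only [Finset.mem_filter, Set.mem_toFinset] at hp
    obtain ⟨h1, h2⟩ := hp
    subst h2
    simpa using h1
  · intro p hp q hq h
    simp only [Finset.mem_filter, Set.mem_toFinset] at hp hq
    exact Prod.ext (hp.2.trans hq.2.symm) h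
  · intro b hb
    simp only [Set.mem_toFinset] at hb
    exact ⟨(a, b), by simpa using hb, rfl⟩

lemma stmt8_ncard_prod {α β : Type*} [Fintype α] [Fintype β] (s : Set α) (w : Set β) :
    (s ×ˢ w).ncard = s.ncard * w.ncard := by
  classical
  rw [stmt8_ncard_fiber_sum]
  have h1 : ∀ a : α, {b : β | (a, b) ∈ s ×ˢ w}.ncard = if a ∈ s then w.ncard else 0 := by
    intro a
    by_cases ha : a ∈ s
    · simp [ha, Set.mem_prod]
    · simp [ha, Set.mem_prod]
  simp only [h1]
  rw [← Finset.sum_filter, Finset.sum_const, smul_eq_mul]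
  congr 1
  rw [Set.ncard_eq_toFinset_card' s]
  congr 1
  ext x
  simp

variable {α β : Type*} [Fintype α] [Fintype β]
  (Γ : SimpleGraph α) (Ω : SimpleGraph β) (v : β)

lemma stmt8_ub_general (W : Set β) (hW : IsTotalDominating Ω W) :
    gammaT (rootedProduct Γ Ω v) ≤ Fintype.card α * W.ncard := by
  have hTD : IsTotalDominating (rootedProduct Γ Ω v) (Set.univ ×ˢ W) := by
    rintro ⟨a, b⟩
    obtain ⟨d, hd, hadj⟩ := hW b
    exact ⟨(a, d), ⟨trivial, hd⟩, Or.inr ⟨rfl, hadj⟩⟩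
  calc gammaT (rootedProduct Γ Ω v) ≤ (Set.univ ×ˢ W).ncard := stmt8_minCard_le hTD
  _ = Fintype.card α * W.ncard := by
      rw [stmt8_ncard_prod, Set.ncard_univ, Nat.card_eq_fintype_card]

lemma stmt8_ub_A (hisoΓ : ∀ a : α, ∃ b : α, Γ.Adj a b) (W : Set β)
    (hW : ∀ b : β, b ≠ v → ∃ d ∈ W, Ω.Adj b d) (hv : v ∈ W) :
    gammaT (rootedProduct Γ Ω v) ≤ Fintype.card α * W.ncard := by
  have hTD : IsTotalDominating (rootedProduct Γ Ω v) (Set.univ ×ˢ W) := by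
    rintro ⟨a, b⟩
    by_cases hb : b = v
    · obtain ⟨a', ha'⟩ := hisoΓ a
      exact ⟨(a', v), ⟨trivial, hv⟩, Or.inl ⟨hb, rfl, ha'⟩⟩
    · obtain ⟨d, hd, hadj⟩ := hW b hb
      exact ⟨(a, d), ⟨trivial, hd⟩, Or.inr ⟨rfl, hadj⟩⟩
  calc gammaT (rootedProduct Γ Ω v) ≤ (Set.univ ×ˢ W).ncard := stmt8_minCard_le hTD
  _ = Fintype.card α * W.ncard := by
      rw [stmt8_ncard_prod, Set.ncard_univ, Nat.card_eq_fintype_card]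

lemma stmt8_ub_T (W : Set β) (hW : ∀ b : β, b ≠ v → ∃ d ∈ W, Ω.Adj b d)
    (T : Set α) (hT : IsTotalDominating Γ T) :
    gammaT (rootedProduct Γ Ω v) ≤ Fintype.card α * W.ncard + T.ncard := by
  have hTD : IsTotalDominating (rootedProduct Γ Ω v) (Set.univ ×ˢ W ∪ T ×ˢ {v}) := by
    rintro ⟨a, b⟩
    by_cases hb : b = v
    · obtain ⟨a', ha', hadj⟩ := hT a
      exact ⟨(a', v), Or.inr ⟨ha', rfl⟩, Or.inl ⟨hb, rfl, hadj⟩⟩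
    · obtain ⟨d, hd, hadj⟩ := hW b hb
      exact ⟨(a, d), Or.inl ⟨trivial, hd⟩, Or.inr ⟨rfl, hadj⟩⟩
  calc gammaT (rootedProduct Γ Ω v) ≤ (Set.univ ×ˢ W ∪ T ×ˢ {v}).ncard :=
        stmt8_minCard_le hTD
  _ ≤ (Set.univ ×ˢ W).ncard + (T ×ˢ ({v} : Set β)).ncard := Set.ncard_union_le _ _
  _ = Fintype.card α * W.ncard + T.ncard := by
      rw [stmt8_ncard_prod, stmt8_ncard_prod, Set.ncard_univ, Nat.card_eq_fintype_card,
        Set.ncard_singleton, mul_one]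

lemma stmt8_ub_D (W' : Set β) (hW' : IsTotalDominating Ω W') (hv : v ∈ W')
    (W : Set β) (hW : ∀ b : β, b ≠ v → ∃ d ∈ W, Ω.Adj b d)
    (D : Set α) (hD : IsDominating Γ D) :
    gammaT (rootedProduct Γ Ω v) ≤ D.ncard * W'.ncard + Dᶜ.ncard * W.ncard := by
  have hTD : IsTotalDominating (rootedProduct Γ Ω v) (D ×ˢ W' ∪ Dᶜ ×ˢ W) := by
    rintro ⟨a, b⟩
    by_cases ha : a ∈ D
    · obtain ⟨d, hd, hadj⟩ := hW' b
      exact ⟨(a, d), Or.inl ⟨ha, hd⟩, Or.inr ⟨rfl, hadj⟩⟩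
    · by_cases hb : b = v
      · rcases hD a with h | ⟨a', ha', hadj⟩
        · exact absurd h ha
        · exact ⟨(a', v), Or.inl ⟨ha', hv⟩, Or.inl ⟨hb, rfl, hadj⟩⟩
      · obtain ⟨d, hd, hadj⟩ := hW b hb
        exact ⟨(a, d), Or.inr ⟨ha, hd⟩, Or.inr ⟨rfl, hadj⟩⟩
  have hdisj : Disjoint (D ×ˢ W') (Dᶜ ×ˢ W) := by
    rw [Set.disjoint_left]
    rintro ⟨a, b⟩ ⟨ha, _⟩ ⟨ha', _⟩
    exact ha' ha
  calc gammaT (rootedProduct Γ Ω v) ≤ (D ×ˢ W' ∪ Dᶜ ×ˢ W).ncard := stmt8_minCard_le hTD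
  _ = D.ncard * W'.ncard + Dᶜ.ncard * W.ncard := by
      rw [Set.ncard_union_eq hdisj (Set.toFinite _) (Set.toFinite _),
        stmt8_ncard_prod, stmt8_ncard_prod]

end stmt8Aux

theorem stmt8 {α β : Type*} [Fintype α] [Fintype β]
    (Γ : SimpleGraph α) (Ω : SimpleGraph β) (v : β)
    (hisoΓ : ∀ a : α, ∃ b : α, Γ.Adj a b)
    (hisoΩ : ∀ a : β, ∃ b : β, Ω.Adj a b) :
    gammaT (rootedProduct Γ Ω v) ∈
      ({Fintype.card α * gammaT Ω - Fintype.card α,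
        gamma Γ + Fintype.card α * gammaT Ω - Fintype.card α,
        gammaT Γ + Fintype.card α * gammaT Ω - Fintype.card α,
        Fintype.card α * gammaT Ω} : Set ℕ) := by
  classical
  simp only [Set.mem_insert_iff, Set.mem_singleton_iff]
  obtain hα | hα := isEmpty_or_nonempty α
  · have h0 : gammaT (rootedProduct Γ Ω v) = 0 := by
      have hTD : IsTotalDominating (rootedProduct Γ Ω v) ∅ :=
        fun u => (IsEmpty.false u.1).elim
      have := stmt8_minCard_le hTD
      simpa [gammaT] using this
    have hc0 : Fintype.card α = 0 := Fintype.card_eq_zero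
    right; right; right
    rw [h0, hc0, zero_mul]
  -- main case
  set n := Fintype.card α with hn
  set t := gammaT Ω with ht
  set H := rootedProduct Γ Ω v with hH
  obtain ⟨u₀, hu₀⟩ := hisoΩ v
  have hTDΩuniv : IsTotalDominating Ω Set.univ := by
    intro b; obtain ⟨c, hc⟩ := hisoΩ b; exact ⟨c, trivial, hc⟩
  obtain ⟨W₀, hW₀, hW₀c⟩ := stmt8_minCard_exists (P := IsTotalDominating Ω) ⟨_, hTDΩuniv⟩
  have hW₀g : W₀.ncard = t := hW₀c
  have ht1 : 1 ≤ t := by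
    obtain ⟨d, hd, _⟩ := hW₀ v
    rw [← hW₀g]
    exact (Set.ncard_pos (Set.toFinite _)).mpr ⟨d, hd⟩
  have hnt : n ≤ n * t := Nat.le_mul_of_pos_right n ht1
  have hnt' : n * (t - 1) = n * t - n := stmt8_mul_pred n t
  -- minimum total dominating set of the rooted product
  have hTDH : IsTotalDominating H Set.univ := by
    intro p
    obtain ⟨c, hc⟩ := hisoΩ p.2
    exact ⟨(p.1, c), trivial, Or.inr ⟨rfl, hc⟩⟩
  obtain ⟨S, hS, hScard⟩ := stmt8_minCard_exists (P := IsTotalDominating H) ⟨_, hTDH⟩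
  have hSg : S.ncard = gammaT H := hScard
  set Wa : α → Set β := fun a => {b : β | (a, b) ∈ S} with hWaDef
  have hsum : gammaT H = ∑ a : α, (Wa a).ncard := by
    rw [← hSg, stmt8_ncard_fiber_sum]
  -- F1 : inside a copy, every non-root vertex has a neighbour in the copy's trace
  have F1 : ∀ (a : α) (b : β), b ≠ v → ∃ d ∈ Wa a, Ω.Adj b d := by
    intro a b hb
    obtain ⟨p, hpS, hadj⟩ := hS (a, b)
    rcases hadj with ⟨h1, h2, h3⟩ | ⟨h1, h2⟩
    · exact absurd h1 hb
    · refine ⟨p.2, ?_, h2⟩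
      show (a, p.2) ∈ S
      rw [show ((a, p.2) : α × β) = p from Prod.ext h1 rfl]
      exact hpS
  -- F2 : each trace has at least t - 1 elements
  have F2 : ∀ a : α, t ≤ (Wa a).ncard + 1 := by
    intro a
    have hTD : IsTotalDominating Ω (insert u₀ (Wa a)) := by
      intro b
      by_cases hb : b = v
      · exact ⟨u₀, Set.mem_insert _ _, hb ▸ hu₀⟩
      · obtain ⟨d, hd, hadj⟩ := F1 a b hb
        exact ⟨d, Set.mem_insert_of_mem _ hd, hadj⟩
    have h5 : t ≤ (insert u₀ (Wa a)).ncard := stmt8_minCard_le hTD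
    exact le_trans h5 (Set.ncard_insert_le _ _)
  -- global lower bound
  have hlb1 : n * (t - 1) ≤ gammaT H := by
    rw [hsum]
    calc n * (t - 1) = ∑ _a : α, (t - 1) := by
          rw [Finset.sum_const, Finset.card_univ, smul_eq_mul, ← hn, mul_comm]
    _ ≤ ∑ a : α, (Wa a).ncard := Finset.sum_le_sum fun a _ => by have := F2 a; omega
  by_cases hA : ∃ W : Set β, (∀ b : β, b ≠ v → ∃ d ∈ W, Ω.Adj b d) ∧ v ∈ W ∧ W.ncard < t
  · -- value n*t - n
    obtain ⟨W, hWt, hWv, hWc⟩ := hA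
    left
    have hub : gammaT H ≤ n * (t - 1) :=
      le_trans (stmt8_ub_A Γ Ω v hisoΓ W hWt hWv) (Nat.mul_le_mul le_rfl (by omega))
    rw [← hnt']
    exact le_antisymm hub hlb1
  -- no deficient copy contains the root or has the root adjacent to its trace
  have hdef_not_root : ∀ a : α, (Wa a).ncard < t → v ∉ Wa a := by
    intro a hlt hv
    exact hA ⟨Wa a, F1 a, hv, hlt⟩
  have hdef_nbr : ∀ a : α, (Wa a).ncard < t → ∃ a', Γ.Adj a a' ∧ (a', v) ∈ S := by
    intro a hlt
    obtain ⟨p, hpS, hadj⟩ := hS (a, v)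
    rcases hadj with ⟨h1, h2, h3⟩ | ⟨h1, h2⟩
    · refine ⟨p.1, h3, ?_⟩
      rw [show ((p.1, v) : α × β) = p from Prod.ext rfl h2.symm]
      exact hpS
    · exfalso
      have hc : (a, p.2) ∈ S := by
        rw [show ((a, p.2) : α × β) = p from Prod.ext h1 rfl]; exact hpS
      have hTD : IsTotalDominating Ω (Wa a) := by
        intro b
        by_cases hb : b = v
        · exact ⟨p.2, hc, hb ▸ h2⟩
        · exact F1 a b hb
      have h5 : t ≤ (Wa a).ncard := stmt8_minCard_le hTD
      omega
  by_cases hB : ∃ a₀ : α, (Wa a₀).ncard < t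
  case neg =>
    -- value n * t
    right; right; right
    push_neg at hB
    have hlb : n * t ≤ gammaT H := by
      rw [hsum]
      calc n * t = ∑ _a : α, t := by
            rw [Finset.sum_const, Finset.card_univ, smul_eq_mul, ← hn, mul_comm]
      _ ≤ ∑ a : α, (Wa a).ncard := Finset.sum_le_sum fun a _ => hB a
    have hub : gammaT H ≤ n * t := by
      have h5 := stmt8_ub_general Γ Ω v W₀ hW₀
      rwa [hW₀g, ← hn] at h5
    exact le_antisymm hub hlb
  obtain ⟨a₀, ha₀⟩ := hB
  have hWexc := F1 a₀
  have hWc : (Wa a₀).ncard ≤ t - 1 := by omega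
  by_cases hC : ∃ W' : Set β, IsTotalDominating Ω W' ∧ v ∈ W' ∧ W'.ncard ≤ t
  · -- value gamma Γ + n*t - n
    right; left
    obtain ⟨W', hW', hW'v, hW'c⟩ := hC
    have hDuniv : IsDominating Γ (Set.univ : Set α) := fun a => Or.inl trivial
    obtain ⟨D, hD, hDc⟩ := stmt8_minCard_exists (P := IsDominating Γ) ⟨_, hDuniv⟩
    have hDg : D.ncard = gamma Γ := hDc
    have hDlen : D.ncard ≤ n := by
      have h5 := Set.ncard_le_ncard (Set.subset_univ D) (Set.toFinite _)
      rwa [Set.ncard_univ, Nat.card_eq_fintype_card, ← hn] at h5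
    have hDcompl : Dᶜ.ncard = n - D.ncard := by
      have h5 := Set.ncard_add_ncard_compl D (Set.toFinite _) (Set.toFinite _)
      rw [Nat.card_eq_fintype_card, ← hn] at h5
      omega
    have hub : gammaT H ≤ n * (t - 1) + gamma Γ := by
      have h1 := stmt8_ub_D Γ Ω v W' hW' hW'v (Wa a₀) hWexc D hD
      have h2 : D.ncard * W'.ncard + Dᶜ.ncard * (Wa a₀).ncard ≤
          D.ncard * t + (n - D.ncard) * (t - 1) := by
        rw [hDcompl]
        exact Nat.add_le_add (Nat.mul_le_mul le_rfl hW'c) (Nat.mul_le_mul le_rfl hWc)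
      have h3 : D.ncard * t + (n - D.ncard) * (t - 1) = n * (t - 1) + D.ncard :=
        stmt8_arith n D.ncard t hDlen ht1
      calc gammaT H ≤ D.ncard * W'.ncard + Dᶜ.ncard * (Wa a₀).ncard := h1
      _ ≤ D.ncard * t + (n - D.ncard) * (t - 1) := h2
      _ = n * (t - 1) + D.ncard := h3
      _ = n * (t - 1) + gamma Γ := by rw [hDg]
    -- lower bound : non-deficient copies dominate Γ
    set Cfin : Finset α := Finset.univ.filter (fun a => t ≤ (Wa a).ncard) with hCfin
    have hCdom : IsDominating Γ (↑Cfin : Set α) := by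
      intro a
      by_cases ha : t ≤ (Wa a).ncard
      · exact Or.inl (by simp [hCfin, ha])
      · push_neg at ha
        obtain ⟨a', hadj, ha'S⟩ := hdef_nbr a ha
        have hv' : v ∈ Wa a' := ha'S
        have ha'big : t ≤ (Wa a').ncard := by
          by_contra h; push_neg at h; exact hdef_not_root a' h hv'
        exact Or.inr ⟨a', by simp [hCfin, ha'big], hadj⟩
    have hgle : gamma Γ ≤ Cfin.card := by
      have h6 : gamma Γ ≤ (↑Cfin : Set α).ncard := stmt8_minCard_le hCdom
      rwa [Set.ncard_coe_finset] at h6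
    have hsumC : ∑ a : α, (if a ∈ Cfin then (1:ℕ) else 0) = Cfin.card := by
      rw [Finset.sum_ite_mem, Finset.univ_inter, Finset.sum_const, smul_eq_mul, mul_one]
    have key : ∀ a : α, (t - 1) + (if a ∈ Cfin then (1:ℕ) else 0) ≤ (Wa a).ncard := by
      intro a
      by_cases haC : a ∈ Cfin
      · have h7 : t ≤ (Wa a).ncard := by simpa [hCfin] using haC
        rw [if_pos haC]
        omega
      · have := F2 a
        rw [if_neg haC]
        omega
    have hlb : n * (t - 1) + gamma Γ ≤ gammaT H := by
      have h4 : n * (t - 1) + Cfin.card ≤ ∑ a : α, (Wa a).ncard := by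
        calc n * (t - 1) + Cfin.card
            = ∑ a : α, ((t - 1) + if a ∈ Cfin then (1:ℕ) else 0) := by
              rw [Finset.sum_add_distrib, hsumC, Finset.sum_const, Finset.card_univ,
                smul_eq_mul, ← hn, mul_comm]
        _ ≤ ∑ a : α, (Wa a).ncard := Finset.sum_le_sum fun a _ => key a
      rw [hsum]
      exact le_trans (Nat.add_le_add le_rfl hgle) h4
    have hEq : gammaT H = n * (t - 1) + gamma Γ := le_antisymm hub hlb
    rw [hEq, hnt', Nat.add_comm, ← Nat.add_sub_assoc hnt]
  · -- value gammaT Γ + n*t - n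
    right; right; left
    have hTDΓuniv : IsTotalDominating Γ Set.univ := by
      intro a; obtain ⟨a', ha'⟩ := hisoΓ a; exact ⟨a', trivial, ha'⟩
    obtain ⟨T₀, hT₀, hT₀c⟩ := stmt8_minCard_exists (P := IsTotalDominating Γ) ⟨_, hTDΓuniv⟩
    have hT₀g : T₀.ncard = gammaT Γ := hT₀c
    have hub : gammaT H ≤ n * (t - 1) + gammaT Γ := by
      have h1 := stmt8_ub_T Γ Ω v (Wa a₀) hWexc T₀ hT₀
      rw [hT₀g, ← hn] at h1
      exact le_trans h1 (Nat.add_le_add (Nat.mul_le_mul le_rfl hWc) le_rfl)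
    -- lower bound
    choose g hg using hisoΓ
    set R : Finset α := Finset.univ.filter (fun a => (a, v) ∈ S) with hRdef
    set X : Finset α := Finset.univ.filter (fun a => ¬∃ a' ∈ R, Γ.Adj a a') with hXdef
    have hXTD : ∀ a : α, a ∈ X → IsTotalDominating Ω (Wa a) := by
      intro a haX
      have hax : ¬∃ a' ∈ R, Γ.Adj a a' := by simpa [hXdef] using haX
      obtain ⟨p, hpS, hadj⟩ := hS (a, v)
      rcases hadj with ⟨h1, h2, h3⟩ | ⟨h1, h2⟩
      · exfalso
        refine hax ⟨p.1, ?_, h3⟩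
        simp only [hRdef, Finset.mem_filter, Finset.mem_univ, true_and]
        rw [show ((p.1, v) : α × β) = p from Prod.ext rfl h2.symm]
        exact hpS
      · intro b
        by_cases hb : b = v
        · refine ⟨p.2, ?_, hb ▸ h2⟩
          show (a, p.2) ∈ S
          rw [show ((a, p.2) : α × β) = p from Prod.ext h1 rfl]
          exact hpS
        · exact F1 a b hb
    have hXbig : ∀ a : α, a ∈ X → t ≤ (Wa a).ncard := fun a haX =>
      stmt8_minCard_le (hXTD a haX)
    have hRroot : ∀ a : α, a ∈ R → v ∈ Wa a := by
      intro a haR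
      have : (a, v) ∈ S := by simpa [hRdef] using haR
      exact this
    have hRbig : ∀ a : α, a ∈ R → t ≤ (Wa a).ncard := by
      intro a haR
      by_contra h; push_neg at h
      exact hdef_not_root a h (hRroot a haR)
    have hRXbig : ∀ a : α, a ∈ R → a ∈ X → t + 1 ≤ (Wa a).ncard := by
      intro a haR haX
      by_contra h; push_neg at h
      exact hC ⟨Wa a, hXTD a haX, hRroot a haR, by omega⟩
    have hTtd : IsTotalDominating Γ (↑(R ∪ X.image g) : Set α) := by
      intro a
      by_cases hx : ∃ a' ∈ R, Γ.Adj a a'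
      · obtain ⟨a', ha', hadj⟩ := hx
        exact ⟨a', by simp [Finset.mem_union, ha'], hadj⟩
      · refine ⟨g a, ?_, hg a⟩
        have haX : a ∈ X := by simp only [hXdef, Finset.mem_filter, Finset.mem_univ, true_and]; exact hx
        simp only [Finset.coe_union, Set.mem_union, Finset.mem_coe]
        exact Or.inr (Finset.mem_image.mpr ⟨a, haX, rfl⟩)
    have hgtle : gammaT Γ ≤ R.card + X.card := by
      have h1 : gammaT Γ ≤ (↑(R ∪ X.image g) : Set α).ncard := stmt8_minCard_le hTtd
      rw [Set.ncard_coe_finset] at h1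
      calc gammaT Γ ≤ (R ∪ X.image g).card := h1
      _ ≤ R.card + (X.image g).card := Finset.card_union_le _ _
      _ ≤ R.card + X.card := Nat.add_le_add le_rfl Finset.card_image_le
    have hsumR : ∑ a : α, (if a ∈ R then (1:ℕ) else 0) = R.card := by
      rw [Finset.sum_ite_mem, Finset.univ_inter, Finset.sum_const, smul_eq_mul, mul_one]
    have hsumX : ∑ a : α, (if a ∈ X then (1:ℕ) else 0) = X.card := by
      rw [Finset.sum_ite_mem, Finset.univ_inter, Finset.sum_const, smul_eq_mul, mul_one]
    have key : ∀ a : α,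
        (t - 1) + ((if a ∈ R then (1:ℕ) else 0) + (if a ∈ X then (1:ℕ) else 0))
          ≤ (Wa a).ncard := by
      intro a
      by_cases haR : a ∈ R <;> by_cases haX : a ∈ X
      · have := hRXbig a haR haX; rw [if_pos haR, if_pos haX]; omega
      · have := hRbig a haR; rw [if_pos haR, if_neg haX]; omega
      · have := hXbig a haX; rw [if_neg haR, if_pos haX]; omega
      · have := F2 a; rw [if_neg haR, if_neg haX]; omega
    have hlb : n * (t - 1) + gammaT Γ ≤ gammaT H := by
      have h4 : n * (t - 1) + (R.card + X.card) ≤ ∑ a : α, (Wa a).ncard := by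
        calc n * (t - 1) + (R.card + X.card)
            = ∑ a : α, ((t - 1) +
                ((if a ∈ R then (1:ℕ) else 0) + (if a ∈ X then (1:ℕ) else 0))) := by
              rw [Finset.sum_add_distrib, Finset.sum_add_distrib, hsumR, hsumX,
                Finset.sum_const, Finset.card_univ, smul_eq_mul, ← hn, mul_comm]
        _ ≤ ∑ a : α, (Wa a).ncard := Finset.sum_le_sum fun a _ => key a
      rw [hsum]
      exact le_trans (Nat.add_le_add le_rfl hgtle) h4
    have hEq : gammaT H = n * (t - 1) + gammaT Γ := le_antisymm hub hlb
    rw [hEq, hnt', Nat.add_comm, ← Nat.add_sub_assoc hnt]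
end

section
/- Let Γ be a graph on n vertices without isolated vertices with γ_2(Γ) < n, let Ω be a graph, and v ∈ V(Ω). Then γ_2(Γ ∘_v Ω) = n·γ_2(Ω) if and only if γ_2(Ω − v) ≥ γ_2(Ω). -/
open SimpleGraph

variable {V : Type*}

section Aux
set_option linter.unusedSectionVars false

variable {V : Type*}

lemma gamma2_le' (G : SimpleGraph V) {D : Set V} (h : IsTwoDominating G D) :
    gamma2 G ≤ D.ncard := Nat.sInf_le ⟨D, h, rfl⟩

lemma gamma2_exists' (G : SimpleGraph V) :
    ∃ D : Set V, IsTwoDominating G D ∧ D.ncard = gamma2 G := by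
  have hmem : (Set.univ : Set V).ncard ∈
      {n : ℕ | ∃ D : Set V, IsTwoDominating G D ∧ D.ncard = n} :=
    ⟨Set.univ, fun u hu => absurd (Set.mem_univ u) hu, rfl⟩
  exact Nat.sInf_mem ⟨_, hmem⟩

lemma ncard_prod' {A B : Type*} (s : Set A) (t : Set B) :
    (s ×ˢ t).ncard = s.ncard * t.ncard := by
  rw [← Nat.card_coe_set_eq, ← Nat.card_coe_set_eq, ← Nat.card_coe_set_eq,
    Nat.card_congr (Equiv.Set.prod s t), Nat.card_prod]

lemma ncard_fiber_sum {A B : Type*} [Fintype A] [Fintype B] (D : Set (A × B)) :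
    D.ncard = ∑ a : A, {u : B | (a, u) ∈ D}.ncard := by
  classical
  rw [Set.ncard_eq_toFinset_card']
  rw [Finset.card_eq_sum_card_fiberwise (f := Prod.fst) (t := Finset.univ)
    (fun x _ => Finset.mem_univ _)]
  refine Finset.sum_congr rfl fun a _ => ?_
  rw [Set.ncard_eq_toFinset_card']
  have himg : D.toFinset.filter (fun p => p.1 = a)
      = ({u : B | (a, u) ∈ D}).toFinset.image (fun u => (a, u)) := by
    ext ⟨x, y⟩
    simp only [Finset.mem_filter, Set.mem_toFinset, Finset.mem_image, Set.mem_setOf_eq]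
    constructor
    · rintro ⟨h1, rfl⟩
      exact ⟨y, h1, rfl⟩
    · rintro ⟨u, hu, heq⟩
      cases heq
      exact ⟨hu, rfl⟩
  rw [himg, Finset.card_image_of_injective _ (fun x y h => (Prod.mk.injEq _ _ _ _ ▸ h).2)]

variable {α β : Type*} [Fintype α] [Fintype β]
  (Γ : SimpleGraph α) (Ω : SimpleGraph β) (v : β)

/-- neighbors of a non-root vertex of a copy, intersected with any set, inject
into the corresponding copy-local set -/
lemma nbhd_sub (D : Set (α × β)) (a : α) (u : β) (hu : u ≠ v) :
    (rootedProduct Γ Ω v).neighborSet (a, u) ∩ D ⊆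
      (fun w => (a, w)) '' (Ω.neighborSet u ∩ {w : β | (a, w) ∈ D}) := by
  rintro ⟨b, w⟩ ⟨hadj, hD⟩
  rcases hadj with ⟨h1, _, _⟩ | ⟨h1, h2⟩
  · exact absurd h1 hu
  · simp only at h1 h2
    subst h1
    exact ⟨w, ⟨h2, hD⟩, rfl⟩

lemma upper_bound : gamma2 (rootedProduct Γ Ω v) ≤ Fintype.card α * gamma2 Ω := by
  obtain ⟨S, hS, hcard⟩ := gamma2_exists' Ω
  have h2d : IsTwoDominating (rootedProduct Γ Ω v) (Set.univ ×ˢ S) := by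
    rintro ⟨a, u⟩ hp
    have hu : u ∉ S := fun h => hp ⟨Set.mem_univ a, h⟩
    have key : (fun w => (a, w)) '' (Ω.neighborSet u ∩ S) ⊆
        (rootedProduct Γ Ω v).neighborSet (a, u) ∩ (Set.univ ×ˢ S) := by
      rintro q ⟨w, ⟨hw1, hw2⟩, rfl⟩
      exact ⟨Or.inr ⟨rfl, hw1⟩, ⟨Set.mem_univ a, hw2⟩⟩
    calc 2 ≤ (Ω.neighborSet u ∩ S).ncard := hS u hu
      _ = ((fun w => (a, w)) '' (Ω.neighborSet u ∩ S)).ncard :=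
          (Set.ncard_image_of_injective _ (fun x y h => (Prod.mk.injEq _ _ _ _ ▸ h).2)).symm
      _ ≤ _ := Set.ncard_le_ncard key (Set.toFinite _)
  calc gamma2 (rootedProduct Γ Ω v) ≤ (Set.univ ×ˢ S).ncard := gamma2_le' _ h2d
    _ = Fintype.card α * gamma2 Ω := by
        rw [ncard_prod', Set.ncard_univ, Nat.card_eq_fintype_card, hcard]

lemma lower_bound (h : gamma2 Ω ≤ gamma2 (Ω.induce {w : β | w ≠ v})) :
    Fintype.card α * gamma2 Ω ≤ gamma2 (rootedProduct Γ Ω v) := by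
  obtain ⟨D, hD, hcard⟩ := gamma2_exists' (rootedProduct Γ Ω v)
  have key : ∀ a : α, gamma2 Ω ≤ {u : β | (a, u) ∈ D}.ncard := by
    intro a
    set Da : Set β := {u : β | (a, u) ∈ D} with hDa
    by_cases hv : v ∈ Da
    · -- Da is a 2-dominating set of Ω
      refine gamma2_le' _ ?_
      intro u hu
      have huv : u ≠ v := fun h => hu (h ▸ hv)
      have hD2 := hD (a, u) hu
      calc 2 ≤ ((rootedProduct Γ Ω v).neighborSet (a, u) ∩ D).ncard := hD2
        _ ≤ ((fun w => (a, w)) '' (Ω.neighborSet u ∩ Da)).ncard :=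
            Set.ncard_le_ncard (nbhd_sub Γ Ω v D a u huv) (Set.toFinite _)
        _ = (Ω.neighborSet u ∩ Da).ncard :=
            Set.ncard_image_of_injective _ (fun x y h => (Prod.mk.injEq _ _ _ _ ▸ h).2)
    · -- Da lifts to a 2-dominating set of Ω - v
      set T : Set ({w : β | w ≠ v} : Set β) := {x | (x : β) ∈ Da} with hT
      have hval : Subtype.val '' T = Da := by
        ext u
        constructor
        · rintro ⟨x, hx, rfl⟩; exact hx
        · intro hu
          exact ⟨⟨u, fun h => hv (h ▸ hu)⟩, hu, rfl⟩
      have hTcard : T.ncard = Da.ncard := by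
        rw [← hval, Set.ncard_image_of_injective _ Subtype.val_injective]
      have hTdom : IsTwoDominating (Ω.induce {w : β | w ≠ v}) T := by
        intro x hx
        have hu : (x : β) ∉ Da := hx
        have hD2 := hD (a, (x : β)) hu
        have sub2 : Ω.neighborSet (x : β) ∩ Da ⊆
            Subtype.val '' ((Ω.induce {w : β | w ≠ v}).neighborSet x ∩ T) := by
          rintro w ⟨hw1, hw2⟩
          have hwv : w ≠ v := fun h => hv (h ▸ hw2)
          exact ⟨⟨w, hwv⟩, ⟨hw1, hw2⟩, rfl⟩
        calc 2 ≤ ((rootedProduct Γ Ω v).neighborSet (a, (x : β)) ∩ D).ncard := hD2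
          _ ≤ ((fun w => (a, w)) '' (Ω.neighborSet (x : β) ∩ Da)).ncard :=
              Set.ncard_le_ncard (nbhd_sub Γ Ω v D a _ x.2) (Set.toFinite _)
          _ = (Ω.neighborSet (x : β) ∩ Da).ncard :=
              Set.ncard_image_of_injective _ (fun x y h => (Prod.mk.injEq _ _ _ _ ▸ h).2)
          _ ≤ (Subtype.val '' ((Ω.induce {w : β | w ≠ v}).neighborSet x ∩ T)).ncard :=
              Set.ncard_le_ncard sub2 (Set.toFinite _)
          _ = ((Ω.induce {w : β | w ≠ v}).neighborSet x ∩ T).ncard :=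
              Set.ncard_image_of_injective _ Subtype.val_injective
      calc gamma2 Ω ≤ gamma2 (Ω.induce {w : β | w ≠ v}) := h
        _ ≤ T.ncard := gamma2_le' _ hTdom
        _ = Da.ncard := hTcard
  calc Fintype.card α * gamma2 Ω = ∑ _a : α, gamma2 Ω := by
        rw [Finset.sum_const, Finset.card_univ, smul_eq_mul]
    _ ≤ ∑ a : α, {u : β | (a, u) ∈ D}.ncard := Finset.sum_le_sum fun a _ => key a
    _ = D.ncard := (ncard_fiber_sum D).symm
    _ = gamma2 (rootedProduct Γ Ω v) := hcard

lemma strict_bound (h2 : gamma2 Γ < Fintype.card α)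
    (h : gamma2 (Ω.induce {w : β | w ≠ v}) < gamma2 Ω) :
    gamma2 (rootedProduct Γ Ω v) < Fintype.card α * gamma2 Ω := by
  obtain ⟨A, hA, hAcard⟩ := gamma2_exists' Γ
  obtain ⟨T, hT, hTcard⟩ := gamma2_exists' (Ω.induce {w : β | w ≠ v})
  set S : Set β := Subtype.val '' T with hS
  have hvS : v ∉ S := by
    rintro ⟨x, _, hx⟩
    exact x.2 hx
  set D : Set (α × β) := (Set.univ ×ˢ S) ∪ (A ×ˢ {v}) with hD
  have hdom : IsTwoDominating (rootedProduct Γ Ω v) D := by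
    rintro ⟨a, u⟩ hp
    have huS : u ∉ S := fun h => hp (Or.inl ⟨Set.mem_univ a, h⟩)
    by_cases huv : u = v
    · subst huv
      have haA : a ∉ A := fun h => hp (Or.inr ⟨h, rfl⟩)
      have key : (fun b => (b, u)) '' (Γ.neighborSet a ∩ A) ⊆
          (rootedProduct Γ Ω u).neighborSet (a, u) ∩ D := by
        rintro q ⟨b, ⟨hb1, hb2⟩, rfl⟩
        exact ⟨Or.inl ⟨rfl, rfl, hb1⟩, Or.inr ⟨hb2, rfl⟩⟩
      calc 2 ≤ (Γ.neighborSet a ∩ A).ncard := hA a haA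
        _ = ((fun b => (b, u)) '' (Γ.neighborSet a ∩ A)).ncard :=
            (Set.ncard_image_of_injective _ (fun x y h => (Prod.mk.injEq _ _ _ _ ▸ h).1)).symm
        _ ≤ _ := Set.ncard_le_ncard key (Set.toFinite _)
    · set x : ({w : β | w ≠ v} : Set β) := ⟨u, huv⟩ with hx
      have hxT : x ∉ T := fun h => huS ⟨x, h, rfl⟩
      have key : (fun w : ({w : β | w ≠ v} : Set β) => (a, (w : β))) ''
          ((Ω.induce {w : β | w ≠ v}).neighborSet x ∩ T) ⊆
          (rootedProduct Γ Ω v).neighborSet (a, u) ∩ D := by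
        rintro q ⟨w, ⟨hw1, hw2⟩, rfl⟩
        exact ⟨Or.inr ⟨rfl, hw1⟩, Or.inl ⟨Set.mem_univ a, ⟨w, hw2, rfl⟩⟩⟩
      have hinj : Function.Injective
          (fun w : ({w : β | w ≠ v} : Set β) => (a, (w : β))) := by
        intro x y h
        exact Subtype.val_injective (Prod.mk.injEq _ _ _ _ ▸ h).2
      calc 2 ≤ ((Ω.induce {w : β | w ≠ v}).neighborSet x ∩ T).ncard := hT x hxT
        _ = _ := (Set.ncard_image_of_injective _ hinj).symm
        _ ≤ _ := Set.ncard_le_ncard key (Set.toFinite _)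
  have hdisj : Disjoint (Set.univ ×ˢ S) (A ×ˢ ({v} : Set β)) := by
    rw [Set.disjoint_left]
    rintro ⟨a, u⟩ ⟨_, hu⟩ ⟨_, hv2⟩
    exact hvS (hv2 ▸ hu)
  have hDcard : D.ncard = Fintype.card α * T.ncard + A.ncard := by
    rw [hD, Set.ncard_union_eq hdisj (Set.toFinite _) (Set.toFinite _),
      ncard_prod', ncard_prod', Set.ncard_univ, Nat.card_eq_fintype_card,
      Set.ncard_singleton, mul_one, hS,
      Set.ncard_image_of_injective _ Subtype.val_injective]
  have hT1 : T.ncard + 1 ≤ gamma2 Ω := by rw [hTcard]; omega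
  have hAlt : A.ncard < Fintype.card α := by rw [hAcard]; exact h2
  calc gamma2 (rootedProduct Γ Ω v) ≤ D.ncard := gamma2_le' _ hdom
    _ = Fintype.card α * T.ncard + A.ncard := hDcard
    _ < Fintype.card α * T.ncard + Fintype.card α := by omega
    _ = Fintype.card α * (T.ncard + 1) := by ring
    _ ≤ Fintype.card α * gamma2 Ω := Nat.mul_le_mul_left _ hT1

end Aux

theorem stmt12 {α β : Type*} [Fintype α] [Fintype β]
    (Γ : SimpleGraph α) (Ω : SimpleGraph β) (v : β)
    (hiso : ∀ a : α, ∃ b : α, Γ.Adj a b)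
    (h2 : gamma2 Γ < Fintype.card α) :
    gamma2 (rootedProduct Γ Ω v) = Fintype.card α * gamma2 Ω ↔
      gamma2 Ω ≤ gamma2 (Ω.induce {w : β | w ≠ v}) := by
  constructor
  · intro heq
    by_contra hlt
    push_neg at hlt
    have := strict_bound Γ Ω v h2 hlt
    omega
  · intro hle
    exact le_antisymm (upper_bound Γ Ω v) (lower_bound Γ Ω v hle)
end

section
/- The domination number of the fractal cubic network satisfies the recurrence γ(FCN(l)) = 4·γ(FCN(l−1)) − 2 for all l ≥ 1, where γ(FCN(0)) = 2. -/
open SimpleGraph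

variable {V : Type*}

/-! ### Auxiliary machinery for Statement 13 -/

instance fcnFintype : ∀ l, Fintype (FCNVert l)
  | 0 => inferInstanceAs (Fintype (Fin 4))
  | (l + 1) => letI := fcnFintype l; inferInstanceAs (Fintype (Fin 4 × FCNVert l))

/-- The sequence `a 0 = 2`, `a (l+1) = 4 a l - 2`. -/
def gseq : ℕ → ℕ
  | 0 => 2
  | (l + 1) => 4 * gseq l - 2

lemma gseq_ge (l : ℕ) : 2 ≤ gseq l := by
  induction l with
  | zero => simp [gseq]
  | succ l ih => simp only [gseq]; omega

lemma fiber4 {β : Type*} [Fintype β] (S : Set (Fin 4 × β)) :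
    S.ncard = {x | ((0:Fin 4),x) ∈ S}.ncard + {x | ((1:Fin 4),x) ∈ S}.ncard
      + {x | ((2:Fin 4),x) ∈ S}.ncard + {x | ((3:Fin 4),x) ∈ S}.ncard := by
  have key : ∀ i : Fin 4, ((fun x => (i,x)) '' {x | (i,x) ∈ S}).ncard = {x | (i,x) ∈ S}.ncard :=
    fun i => Set.ncard_image_of_injective _ (fun a b h => by simpa using h)
  have hun : S = ((fun x => ((0:Fin 4),x)) '' {x | ((0:Fin 4),x) ∈ S})
      ∪ ((fun x => ((1:Fin 4),x)) '' {x | ((1:Fin 4),x) ∈ S})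
      ∪ ((fun x => ((2:Fin 4),x)) '' {x | ((2:Fin 4),x) ∈ S})
      ∪ ((fun x => ((3:Fin 4),x)) '' {x | ((3:Fin 4),x) ∈ S}) := by
    ext ⟨i, x⟩
    simp only [Set.mem_union, Set.mem_image, Set.mem_setOf_eq, Prod.mk.injEq]
    constructor
    · intro h
      fin_cases i
      · exact Or.inl (Or.inl (Or.inl ⟨x, h, rfl, rfl⟩))
      · exact Or.inl (Or.inl (Or.inr ⟨x, h, rfl, rfl⟩))
      · exact Or.inl (Or.inr ⟨x, h, rfl, rfl⟩)
      · exact Or.inr ⟨x, h, rfl, rfl⟩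
    · rintro (((⟨y, hy, rfl, rfl⟩ | ⟨y, hy, rfl, rfl⟩) | ⟨y, hy, rfl, rfl⟩) | ⟨y, hy, rfl, rfl⟩) <;> exact hy
  have hdisj : ∀ (i j : Fin 4), i ≠ j → Disjoint ((fun x => (i,x)) '' {x | (i,x) ∈ S})
      ((fun x => (j,x)) '' {x | (j,x) ∈ S}) := by
    intro i j hij
    rw [Set.disjoint_left]
    rintro p ⟨y, _, rfl⟩ ⟨z, _, h⟩
    exact hij (congrArg Prod.fst h).symm
  conv_lhs => rw [hun]
  rw [Set.ncard_union_eq (by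
      refine Set.disjoint_union_left.2 ⟨Set.disjoint_union_left.2 ⟨?_, ?_⟩, ?_⟩ <;>
        exact hdisj _ _ (by decide)) (Set.toFinite _) (Set.toFinite _),
    Set.ncard_union_eq (by
      refine Set.disjoint_union_left.2 ⟨?_, ?_⟩ <;> exact hdisj _ _ (by decide))
      (Set.toFinite _) (Set.toFinite _),
    Set.ncard_union_eq (hdisj _ _ (by decide)) (Set.toFinite _) (Set.toFinite _),
    key, key, key, key]

/-- `D` dominates every vertex except possibly `x`. -/
def DomExcept (G : SimpleGraph V) (D : Set V) (x : V) : Prop :=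
  ∀ u : V, u ≠ x → u ∈ D ∨ ∃ d ∈ D, G.Adj u d

/-- The combined inductive invariant. -/
def FCNInv (l : ℕ) : Prop :=
  (∀ D : Set (FCNVert l), IsDominating (FCN l) D → gseq l ≤ D.ncard) ∧
  (∃ B : Set (FCNVert l), DomExcept (FCN l) B (fcnRoot l) ∧ B.ncard = gseq l - 1) ∧
  (∃ E : Set (FCNVert l), fcnRoot l ∈ E ∧ DomExcept (FCN l) E (fcnAux l) ∧
      E.ncard = gseq l - 1) ∧
  (∃ G : Set (FCNVert l), fcnRoot l ∈ G ∧ fcnAux l ∈ G ∧ IsDominating (FCN l) G ∧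
      G.ncard = gseq l)

/-- Union-of-copies construction. -/
def UF {l : ℕ} (F : Fin 4 → Set (FCNVert l)) : Set (FCNVert (l + 1)) :=
  {p : Fin 4 × FCNVert l | p.2 ∈ F p.1}

lemma UF_ncard {l : ℕ} (F : Fin 4 → Set (FCNVert l)) :
    (UF F).ncard = (F 0).ncard + (F 1).ncard + (F 2).ncard + (F 3).ncard := by
  letI := fcnFintype l
  exact fiber4 (UF F)

lemma copy_dom {l : ℕ} (F : Fin 4 → Set (FCNVert l)) (i : Fin 4) (x : FCNVert l)
    (h : x ∈ F i ∨ ∃ d ∈ F i, (FCN l).Adj x d) :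
    ((i, x) : FCNVert (l+1)) ∈ UF F ∨
      ∃ d ∈ UF F, (FCN (l+1)).Adj (i, x) d := by
  rcases h with h | ⟨d, hd, hadj⟩
  · exact Or.inl h
  · exact Or.inr ⟨(i, d), hd, Or.inr ⟨rfl, hadj⟩⟩

lemma cross_dom {l : ℕ} (F : Fin 4 → Set (FCNVert l)) (i j : Fin 4)
    (hadj : (cycleGraph 4).Adj i j) (h : fcnRoot l ∈ F j) :
    ∃ d ∈ UF F, (FCN (l+1)).Adj (i, fcnRoot l) d :=
  ⟨(j, fcnRoot l), h, Or.inl ⟨rfl, rfl, hadj⟩⟩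
lemma C4_lower (D : Set (Fin 4)) (hD : IsDominating (cycleGraph 4) D) : 2 ≤ D.ncard := by
  have h0 : ∃ d ∈ D, d = 0 ∨ (cycleGraph 4).Adj 0 d := by
    rcases hD 0 with h | ⟨d, hd, hadj⟩
    · exact ⟨0, h, Or.inl rfl⟩
    · exact ⟨d, hd, Or.inr hadj⟩
  obtain ⟨d0, hd0, _⟩ := h0
  have h2 : ∃ e ∈ D, e = d0 + 2 ∨ (cycleGraph 4).Adj (d0 + 2) e := by
    rcases hD (d0 + 2) with h | ⟨e, he, hadj⟩
    · exact ⟨d0 + 2, h, Or.inl rfl⟩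
    · exact ⟨e, he, Or.inr hadj⟩
  obtain ⟨e, he, hcase⟩ := h2
  have key : ∀ d : Fin 4, ¬(d = d + 2 ∨ (cycleGraph 4).Adj (d + 2) d) := by decide
  have hne : d0 ≠ e := by rintro rfl; exact key d0 hcase
  calc 2 = ({d0, e} : Set (Fin 4)).ncard := (Set.ncard_pair hne).symm
    _ ≤ D.ncard := Set.ncard_le_ncard (by
        rintro x (rfl | rfl); exacts [hd0, he]) (Set.toFinite _)

lemma fcn_base : FCNInv 0 := by
  refine ⟨C4_lower, ⟨({1} : Set (Fin 4)), ?_, Set.ncard_singleton _⟩,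
    ⟨({3} : Set (Fin 4)), rfl, ?_, Set.ncard_singleton _⟩,
    ⟨({1, 3} : Set (Fin 4)), Or.inr rfl, Or.inl rfl, ?_,
      Set.ncard_pair (show (1 : Fin 4) ≠ 3 by decide)⟩⟩
  · intro u hu
    have hu' : u ≠ (3 : Fin 4) := hu
    fin_cases u
    · exact Or.inr ⟨(1 : Fin 4), rfl, show (cycleGraph 4).Adj _ _ by decide⟩
    · exact Or.inl rfl
    · exact Or.inr ⟨(1 : Fin 4), rfl, show (cycleGraph 4).Adj _ _ by decide⟩
    · exact absurd rfl hu'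
  · intro u hu
    have hu' : u ≠ (1 : Fin 4) := hu
    fin_cases u
    · exact Or.inr ⟨(3 : Fin 4), rfl, show (cycleGraph 4).Adj _ _ by decide⟩
    · exact absurd rfl hu'
    · exact Or.inr ⟨(3 : Fin 4), rfl, show (cycleGraph 4).Adj _ _ by decide⟩
    · exact Or.inl rfl
  · intro u
    fin_cases u
    · exact Or.inr ⟨(1 : Fin 4), Or.inl rfl, show (cycleGraph 4).Adj _ _ by decide⟩
    · exact Or.inl (Or.inl rfl)
    · exact Or.inr ⟨(1 : Fin 4), Or.inl rfl, show (cycleGraph 4).Adj _ _ by decide⟩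
    · exact Or.inl (Or.inr rfl)
lemma fcn_step (l : ℕ) (ih : FCNInv l) : FCNInv (l + 1) := by
  obtain ⟨hlow, ⟨Bs, hB, hBc⟩, ⟨Es, hEr, hE, hEc⟩, ⟨Gs, hGr, hGa, hG, hGc⟩⟩ := ih
  have hn2 : 2 ≤ gseq l := gseq_ge l
  set n := gseq l with hn
  set r := fcnRoot l with hr
  set aux := fcnAux l with ha
  have hroot : fcnRoot (l+1) = (((3 : Fin 4), aux) : FCNVert (l+1)) := rfl
  refine ⟨?_, ?_, ?_, ?_⟩
  · -- lower bound
    intro D hD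
    set Di : Fin 4 → Set (FCNVert l) := fun i => {x | ((i, x) : FCNVert (l+1)) ∈ D} with hDi
    have ha0 : ∀ (i : Fin 4) (u : FCNVert l), u ≠ r →
        u ∈ Di i ∨ ∃ d ∈ Di i, (FCN l).Adj u d := by
      intro i u hu
      rcases hD (i, u) with h | ⟨⟨j, y⟩, hm, hadj⟩
      · exact Or.inl h
      · rcases hadj with ⟨h1, _, _⟩ | ⟨h1, h2⟩
        · exact absurd h1 hu
        · cases h1; exact Or.inr ⟨y, hm, h2⟩
    have hins : ∀ i : Fin 4, n ≤ (Di i).ncard + 1 := by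
      intro i
      have hd : IsDominating (FCN l) (insert r (Di i)) := by
        intro u
        by_cases hu : u = r
        · exact Or.inl (hu ▸ Set.mem_insert _ _)
        · rcases ha0 i u hu with h | ⟨d, hd, hadj⟩
          · exact Or.inl (Set.mem_insert_of_mem _ h)
          · exact Or.inr ⟨d, Set.mem_insert_of_mem _ hd, hadj⟩
      calc n ≤ (insert r (Di i)).ncard := hlow _ hd
        _ ≤ (Di i).ncard + 1 := Set.ncard_insert_le _ _
    have hfull : ∀ i : Fin 4, r ∈ Di i → n ≤ (Di i).ncard := by
      intro i hri
      refine hlow _ ?_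
      intro u
      by_cases hu : u = r
      · exact Or.inl (hu ▸ hri)
      · exact ha0 i u hu
    have hhelp : ∀ i : Fin 4, n ≤ (Di i).ncard ∨
        ∃ j, (cycleGraph 4).Adj i j ∧ n ≤ (Di j).ncard := by
      intro i
      by_cases hri : r ∈ Di i
      · exact Or.inl (hfull i hri)
      by_cases hadjr : ∃ d ∈ Di i, (FCN l).Adj r d
      · left
        refine hlow _ ?_
        intro u
        by_cases hu : u = r
        · subst hu; exact Or.inr hadjr
        · exact ha0 i u hu
      · rcases hD (i, r) with h | ⟨⟨j, y⟩, hm, hadj⟩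
        · exact absurd h hri
        · rcases hadj with ⟨_, h2, h3⟩ | ⟨h1, h2⟩
          · cases h2; exact Or.inr ⟨j, h3, hfull j hm⟩
          · cases h1; exact absurd ⟨y, hm, h2⟩ hadjr
    have hcard : D.ncard = (Di 0).ncard + (Di 1).ncard + (Di 2).ncard + (Di 3).ncard := by
      letI := fcnFintype l
      exact fiber4 D
    have e0 : ∀ j : Fin 4, (cycleGraph 4).Adj 0 j → j = 1 ∨ j = 3 := by decide
    have e1 : ∀ j : Fin 4, (cycleGraph 4).Adj 1 j → j = 0 ∨ j = 2 := by decide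
    have e2 : ∀ j : Fin 4, (cycleGraph 4).Adj 2 j → j = 1 ∨ j = 3 := by decide
    have e3 : ∀ j : Fin 4, (cycleGraph 4).Adj 3 j → j = 0 ∨ j = 2 := by decide
    have g0 : n ≤ (Di 0).ncard ∨ n ≤ (Di 1).ncard ∨ n ≤ (Di 3).ncard := by
      rcases hhelp 0 with h | ⟨j, hj, hc⟩
      · exact Or.inl h
      · rcases e0 j hj with rfl | rfl
        · exact Or.inr (Or.inl hc)
        · exact Or.inr (Or.inr hc)
    have g1 : n ≤ (Di 1).ncard ∨ n ≤ (Di 0).ncard ∨ n ≤ (Di 2).ncard := by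
      rcases hhelp 1 with h | ⟨j, hj, hc⟩
      · exact Or.inl h
      · rcases e1 j hj with rfl | rfl
        · exact Or.inr (Or.inl hc)
        · exact Or.inr (Or.inr hc)
    have g2 : n ≤ (Di 2).ncard ∨ n ≤ (Di 1).ncard ∨ n ≤ (Di 3).ncard := by
      rcases hhelp 2 with h | ⟨j, hj, hc⟩
      · exact Or.inl h
      · rcases e2 j hj with rfl | rfl
        · exact Or.inr (Or.inl hc)
        · exact Or.inr (Or.inr hc)
    have g3 : n ≤ (Di 3).ncard ∨ n ≤ (Di 0).ncard ∨ n ≤ (Di 2).ncard := by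
      rcases hhelp 3 with h | ⟨j, hj, hc⟩
      · exact Or.inl h
      · rcases e3 j hj with rfl | rfl
        · exact Or.inr (Or.inl hc)
        · exact Or.inr (Or.inr hc)
    have i0 := hins 0
    have i1 := hins 1
    have i2 := hins 2
    have i3 := hins 3
    show 4 * n - 2 ≤ D.ncard
    rw [hcard]
    rcases g0 with g|g|g <;> rcases g1 with g'|g'|g' <;> rcases g2 with g''|g''|g'' <;>
      rcases g3 with g'''|g'''|g''' <;> omega
  · -- B(l+1)
    refine ⟨UF ![Bs, Gs, Bs, Es], ?_, ?_⟩
    · rintro ⟨i, x⟩ hu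
      fin_cases i
      · by_cases hx : x = r
        · subst hx; exact Or.inr (cross_dom _ 0 1 (by decide) hGr)
        · exact copy_dom _ 0 x (hB x hx)
      · exact copy_dom _ 1 x (hG x)
      · by_cases hx : x = r
        · subst hx; exact Or.inr (cross_dom _ 2 1 (by decide) hGr)
        · exact copy_dom _ 2 x (hB x hx)
      · have hx : x ≠ aux := fun h => hu (by rw [h]; exact rfl)
        exact copy_dom _ 3 x (hE x hx)
    · have hc : (UF ![Bs, Gs, Bs, Es]).ncard
          = Bs.ncard + Gs.ncard + Bs.ncard + Es.ncard := UF_ncard _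
      rw [hc, hBc, hGc, hEc]
      show _ = 4 * n - 2 - 1
      omega
  · -- E(l+1)
    refine ⟨UF ![Bs, Es, Bs, Gs], hGa, ?_, ?_⟩
    · rintro ⟨i, x⟩ hu
      fin_cases i
      · by_cases hx : x = r
        · subst hx; exact Or.inr (cross_dom _ 0 3 (by decide) hGr)
        · exact copy_dom _ 0 x (hB x hx)
      · have hx : x ≠ aux := fun h => hu (by rw [h]; exact rfl)
        exact copy_dom _ 1 x (hE x hx)
      · by_cases hx : x = r
        · subst hx; exact Or.inr (cross_dom _ 2 3 (by decide) hGr)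
        · exact copy_dom _ 2 x (hB x hx)
      · exact copy_dom _ 3 x (hG x)
    · have hc : (UF ![Bs, Es, Bs, Gs]).ncard
          = Bs.ncard + Es.ncard + Bs.ncard + Gs.ncard := UF_ncard _
      rw [hc, hBc, hGc, hEc]
      show _ = 4 * n - 2 - 1
      omega
  · -- G(l+1)
    refine ⟨UF ![Bs, Gs, Bs, Gs], hGa, hGa, ?_, ?_⟩
    · rintro ⟨i, x⟩
      fin_cases i
      · by_cases hx : x = r
        · subst hx; exact Or.inr (cross_dom _ 0 1 (by decide) hGr)
        · exact copy_dom _ 0 x (hB x hx)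
      · exact copy_dom _ 1 x (hG x)
      · by_cases hx : x = r
        · subst hx; exact Or.inr (cross_dom _ 2 1 (by decide) hGr)
        · exact copy_dom _ 2 x (hB x hx)
      · exact copy_dom _ 3 x (hG x)
    · have hc : (UF ![Bs, Gs, Bs, Gs]).ncard
          = Bs.ncard + Gs.ncard + Bs.ncard + Gs.ncard := UF_ncard _
      rw [hc, hBc, hGc]
      show _ = 4 * n - 2
      omega

lemma fcn_inv : ∀ l, FCNInv l
  | 0 => fcn_base
  | (l + 1) => fcn_step l (fcn_inv l)

lemma gamma_fcn (l : ℕ) : gamma (FCN l) = gseq l := by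
  obtain ⟨hlow, -, -, ⟨Gs, -, -, hG, hGc⟩⟩ := fcn_inv l
  show sInf {m : ℕ | ∃ D : Set (FCNVert l), IsDominating (FCN l) D ∧ D.ncard = m} = gseq l
  refine le_antisymm (Nat.sInf_le ⟨Gs, hG, hGc⟩) ?_
  refine le_csInf ⟨Gs.ncard, Gs, hG, rfl⟩ ?_
  rintro b ⟨D, hD, rfl⟩
  exact hlow D hD
theorem stmt13 :
    gamma (FCN 0) = 2 ∧ ∀ l : ℕ, gamma (FCN (l + 1)) = 4 * gamma (FCN l) - 2 := by
  refine ⟨gamma_fcn 0, fun l => ?_⟩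
  rw [gamma_fcn, gamma_fcn]
  rfl
end

section
/- The independent domination number of the fractal cubic network satisfies γ_i(FCN(l)) = 4·γ_i(FCN(l−1)) − 2 for all l ≥ 1, where γ_i(FCN(0)) = 2. -/
open SimpleGraph

variable {V : Type*}

/-! ### Auxiliary development for stmt14 -/

namespace Stmt14Aux

/-- `x` is covered by `D` in `G`. -/
def Cov {W : Type*} (G : SimpleGraph W) (D : Set W) (x : W) : Prop :=
  x ∈ D ∨ ∃ d ∈ D, G.Adj x d

open scoped Classical in
/-- The inductive invariant: a sharp lower bound together with three witness sets. -/
def InvP {W : Type*} (G : SimpleGraph W) (v a : W) (A : ℕ) : Prop :=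
  (∀ D : Set W, IsIndependentSet G D →
      (∀ x, x ≠ v → x ≠ a → Cov G D x) →
      A ≤ D.ncard + (if Cov G D v then 0 else 1) + (if Cov G D a then 0 else 1)) ∧
  (∃ S : Set W, IsIndependentSet G S ∧ (∀ x, Cov G S x) ∧ v ∈ S ∧ a ∈ S ∧ S.ncard ≤ A) ∧
  (∃ S : Set W, IsIndependentSet G S ∧ (∀ x, x ≠ v → Cov G S x) ∧ v ∉ S ∧ a ∈ S ∧
    S.ncard + 1 ≤ A) ∧
  (∃ S : Set W, IsIndependentSet G S ∧ (∀ x, x ≠ a → Cov G S x) ∧ a ∉ S ∧ v ∈ S ∧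
    S.ncard + 1 ≤ A)

/-- cardinality of a subset of `Fin 4 × β`, fiberwise. -/
lemma ncard_fiber {β : Type*} [Fintype β] (D : Set (Fin 4 × β)) :
    D.ncard = ∑ i : Fin 4, {x | (i, x) ∈ D}.ncard := by
  classical
  rw [Set.ncard_eq_toFinset_card' D]
  rw [Finset.card_eq_sum_card_fiberwise (f := Prod.fst) (t := Finset.univ)
    (fun x _ => Finset.mem_univ _)]
  refine Finset.sum_congr rfl (fun i _ => ?_)
  rw [Set.ncard_eq_toFinset_card' {x | (i, x) ∈ D}]
  apply Finset.card_bij (fun (p : Fin 4 × β) _ => p.2)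
  · intro p hp
    simp only [Finset.mem_filter, Set.mem_toFinset] at hp
    obtain ⟨h1, h2⟩ := hp
    simp only [Set.mem_toFinset, Set.mem_setOf_eq]
    obtain ⟨p1, p2⟩ := p
    subst h2
    exact h1
  · intro p hp q hq h
    simp only [Finset.mem_filter, Set.mem_toFinset] at hp hq
    obtain ⟨p1, p2⟩ := p; obtain ⟨q1, q2⟩ := q
    simp_all [Prod.ext_iff]
  · intro x hx
    simp only [Set.mem_toFinset, Set.mem_setOf_eq] at hx
    exact ⟨(i, x), by simp [hx], rfl⟩

/-- counting lemma on `C₄`: vertices not covered from inside their own copy are at most 2. -/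
lemma c4count (T U : Fin 4 → Bool)
    (hT : ∀ i j : Fin 4, (cycleGraph 4).Adj i j → ¬(T i = true ∧ T j = true))
    (hU : ∀ i, U i = true → ∃ j, (cycleGraph 4).Adj i j ∧ T j = true) :
    (∑ i : Fin 4, (if U i = true then 1 else 0)) ≤ 2 := by
  revert hT hU
  revert T U
  decide

/-- From the invariant, read off `gammaI`. -/
lemma gammaI_eq {W : Type*} {G : SimpleGraph W} {v a : W} {A : ℕ}
    (h : InvP G v a A) : gammaI G = A := by
  obtain ⟨lb, ⟨S, hSi, hSc, -, -, hScard⟩, -, -⟩ := h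
  have hdom : IsDominating G S := fun u => hSc u
  have hSmem : S.ncard ∈ {n : ℕ | ∃ D : Set W,
      (IsDominating G D ∧ IsIndependentSet G D) ∧ D.ncard = n} := ⟨S, ⟨hdom, hSi⟩, rfl⟩
  apply le_antisymm
  · exact le_trans (Nat.sInf_le hSmem) hScard
  · apply le_csInf ⟨S.ncard, hSmem⟩
    rintro n ⟨D, ⟨hD, hDi⟩, rfl⟩
    have h2 := lb D hDi (fun x _ _ => hD x)
    rw [if_pos (show Cov G D v from hD v), if_pos (show Cov G D a from hD a)] at h2
    omega

set_option synthInstance.maxSize 512 in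
set_option maxHeartbeats 1000000 in
private lemma key_base : ∀ F' : Finset (Fin 4),
    (∀ u ∈ F', ∀ w ∈ F', ¬ (cycleGraph 4).Adj u w) →
    (∀ x : Fin 4, x ≠ 3 → x ≠ 1 → (x ∈ F' ∨ ∃ d ∈ F', (cycleGraph 4).Adj x d)) →
    ((((3:Fin 4) ∈ F' ∨ ∃ d ∈ F', (cycleGraph 4).Adj 3 d) →
      ((1:Fin 4) ∈ F' ∨ ∃ d ∈ F', (cycleGraph 4).Adj 1 d) → 2 ≤ F'.card) ∧
     ((((3:Fin 4) ∈ F' ∨ ∃ d ∈ F', (cycleGraph 4).Adj 3 d) ∨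
       ((1:Fin 4) ∈ F' ∨ ∃ d ∈ F', (cycleGraph 4).Adj 1 d)) → 1 ≤ F'.card)) := by decide

/-- Base case: `C₄` with root `3` and aux `1`. -/
lemma base : InvP (cycleGraph 4) (3 : Fin 4) (1 : Fin 4) 2 := by
  refine ⟨?_, ?_, ?_, ?_⟩
  · intro D hind hcov
    have hfin : D.Finite := Set.toFinite D
    set F := hfin.toFinset with hF
    have hmem : ∀ x, x ∈ F ↔ x ∈ D := fun x => hfin.mem_toFinset
    have hcard : D.ncard = F.card := Set.ncard_eq_toFinset_card D hfin
    have hcovF : ∀ x, Cov (cycleGraph 4) D x ↔ (x ∈ F ∨ ∃ d ∈ F, (cycleGraph 4).Adj x d) := by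
      intro x
      unfold Cov
      simp only [hmem]
    have key := key_base
    have hindF : ∀ u ∈ F, ∀ w ∈ F, ¬ (cycleGraph 4).Adj u w :=
      fun u hu w hw => hind u ((hmem u).1 hu) w ((hmem w).1 hw)
    have hcovF' : ∀ x : Fin 4, x ≠ 3 → x ≠ 1 → (x ∈ F ∨ ∃ d ∈ F, (cycleGraph 4).Adj x d) :=
      fun x h3 h1 => (hcovF x).1 (hcov x h3 h1)
    obtain ⟨k1, k2⟩ := key F hindF hcovF'
    by_cases h3 : Cov (cycleGraph 4) D 3 <;> by_cases h1 : Cov (cycleGraph 4) D 1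
    · rw [if_pos h3, if_pos h1]
      have := k1 ((hcovF 3).1 h3) ((hcovF 1).1 h1); omega
    · rw [if_pos h3, if_neg h1]
      have := k2 (Or.inl ((hcovF 3).1 h3)); omega
    · rw [if_neg h3, if_pos h1]
      have := k2 (Or.inr ((hcovF 1).1 h1)); omega
    · rw [if_neg h3, if_neg h1]; omega
  · refine ⟨{1, 3}, ?_, ?_, by simp, by simp, ?_⟩
    · intro u hu w hw
      rcases hu with rfl | hu <;> rcases hw with rfl | hw <;>
        first
        | decide
        | (rw [Set.mem_singleton_iff] at *; subst_vars; decide)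
    · intro x
      fin_cases x
      · exact Or.inr ⟨1, by simp, by decide⟩
      · exact Or.inl (by simp)
      · exact Or.inr ⟨1, by simp, by decide⟩
      · exact Or.inl (by simp)
    · have : ({1, 3} : Set (Fin 4)).ncard = 2 := Set.ncard_pair (by decide)
      omega
  · refine ⟨{1}, ?_, ?_, by simp, by simp, ?_⟩
    · intro u hu w hw
      rw [Set.mem_singleton_iff] at hu hw; subst_vars; decide
    · intro x hx
      fin_cases x
      · exact Or.inr ⟨1, by simp, by decide⟩
      · exact Or.inl (by simp)
      · exact Or.inr ⟨1, by simp, by decide⟩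
      · exact absurd rfl hx
    · simp [Set.ncard_singleton]
  · refine ⟨{3}, ?_, ?_, by simp, by simp, ?_⟩
    · intro u hu w hw
      rw [Set.mem_singleton_iff] at hu hw; subst_vars; decide
    · intro x hx
      fin_cases x
      · exact Or.inr ⟨3, by simp, by decide⟩
      · exact absurd rfl hx
      · exact Or.inr ⟨3, by simp, by decide⟩
      · exact Or.inl (by simp)
    · simp [Set.ncard_singleton]


section Step

variable {β : Type*} [Fintype β] {Ω : SimpleGraph β} {v a : β}

private lemma fst_ne {i j : Fin 4} (hij : i ≠ j) {x y : β}
    (h : ((i, x) : Fin 4 × β) = (j, y)) : False :=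
  hij (congrArg Prod.fst h)

private lemma forall_fin4 {P : Fin 4 → Prop} (h0 : P 0) (h1 : P 1) (h2 : P 2) (h3 : P 3) :
    ∀ i, P i := by
  intro i
  fin_cases i
  · exact h0
  · exact h1
  · exact h2
  · exact h3

private lemma cov_lift {D : Set (Fin 4 × β)} {i : Fin 4} {x : β}
    (h : Cov Ω {y | (i, y) ∈ D} x) : Cov (rootedProduct (cycleGraph 4) Ω v) D (i, x) := by
  rcases h with h | ⟨d, hd, hadj⟩
  · exact Or.inl h
  · exact Or.inr ⟨(i, d), hd, Or.inr ⟨rfl, hadj⟩⟩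

private lemma cov_res {D : Set (Fin 4 × β)} {i : Fin 4} {x : β} (hxv : x ≠ v)
    (h : Cov (rootedProduct (cycleGraph 4) Ω v) D (i, x)) : Cov Ω {y | (i, y) ∈ D} x := by
  rcases h with h | ⟨⟨j, d⟩, hd, hadj⟩
  · exact Or.inl h
  · rcases hadj with ⟨h1, h2, h3⟩ | ⟨h1, h2⟩
    · exact absurd h1 hxv
    · dsimp only at h1 h2
      subst h1
      exact Or.inr ⟨d, hd, h2⟩

private lemma cov_cross {D : Set (Fin 4 × β)} {i j : Fin 4}
    (hadj : (cycleGraph 4).Adj i j) (hv : (j, v) ∈ D) :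
    Cov (rootedProduct (cycleGraph 4) Ω v) D (i, v) :=
  Or.inr ⟨(j, v), hv, Or.inl ⟨rfl, rfl, hadj⟩⟩

private lemma indep_assemble {W : Fin 4 → Set β}
    (hind : ∀ i, IsIndependentSet Ω (W i))
    (hroot : ∀ i j, (cycleGraph 4).Adj i j → v ∈ W i → v ∈ W j → False) :
    IsIndependentSet (rootedProduct (cycleGraph 4) Ω v) {p : Fin 4 × β | p.2 ∈ W p.1} := by
  rintro ⟨i, x⟩ hx ⟨j, y⟩ hy hadj
  rcases hadj with ⟨h1, h2, h3⟩ | ⟨h1, h2⟩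
  · dsimp only at h1 h2
    subst h1; subst h2
    exact hroot i j h3 hx hy
  · dsimp only at h1
    subst h1
    exact hind i x hx y hy h2

private lemma ncard_assemble (W : Fin 4 → Set β) :
    ({p : Fin 4 × β | p.2 ∈ W p.1} : Set (Fin 4 × β)).ncard = ∑ i : Fin 4, (W i).ncard := by
  rw [ncard_fiber]
  simp only [Set.mem_setOf_eq, Set.setOf_mem_eq]

private lemma step (hva : v ≠ a) {A : ℕ} (hA : 2 ≤ A) (h : InvP Ω v a A) :
    InvP (rootedProduct (cycleGraph 4) Ω v) ((3 : Fin 4), a) ((1 : Fin 4), a) (4 * A - 2) := by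
  classical
  obtain ⟨lb, ⟨Wii, hii_ind, hii_cov, hii_v, hii_a, hii_card⟩,
          ⟨Wui, hui_ind, hui_cov, hui_v, hui_a, hui_card⟩,
          ⟨Wiu, hiu_ind, hiu_cov, hiu_a, hiu_v, hiu_card⟩⟩ := h
  refine ⟨?_, ?_, ?_, ?_⟩
  · -- lower bound
    intro D hind hcov
    set Di : Fin 4 → Set β := fun i => {y | (i, y) ∈ D} with hDidef
    have hindres : ∀ i, IsIndependentSet Ω (Di i) := by
      intro i x hx y hy hadj
      exact hind (i, x) hx (i, y) hy (Or.inr ⟨rfl, hadj⟩)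
    have hne3 : ∀ (i : Fin 4) (x : β), x ≠ a → ((i, x) : Fin 4 × β) ≠ ((3 : Fin 4), a) :=
      fun i x hx h => hx (congrArg Prod.snd h)
    have hne1 : ∀ (i : Fin 4) (x : β), x ≠ a → ((i, x) : Fin 4 × β) ≠ ((1 : Fin 4), a) :=
      fun i x hx h => hx (congrArg Prod.snd h)
    have hcovres : ∀ (i : Fin 4) (x : β), x ≠ v → x ≠ a → Cov Ω (Di i) x := by
      intro i x hxv hxa
      exact cov_res hxv (hcov (i, x) (hne3 i x hxa) (hne1 i x hxa))
    have hlb := fun i => lb (Di i) (hindres i) (hcovres i)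
    have hcov0a : Cov Ω (Di 0) a :=
      cov_res (Ne.symm hva)
        (hcov (0, a) (fst_ne (by decide)) (fst_ne (by decide)))
    have hcov2a : Cov Ω (Di 2) a :=
      cov_res (Ne.symm hva)
        (hcov (2, a) (fst_ne (by decide)) (fst_ne (by decide)))
    -- covering of roots of copies via the cycle
    set T : Fin 4 → Bool := fun i => if v ∈ Di i then true else false with hTdef
    set U : Fin 4 → Bool := fun i => if Cov Ω (Di i) v then false else true with hUdef
    have hTtrue : ∀ i, T i = true ↔ v ∈ Di i := by
      intro i
      by_cases hc : v ∈ Di i <;> simp [hTdef, hc]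
    have hUtrue : ∀ i, U i = true ↔ ¬ Cov Ω (Di i) v := by
      intro i
      by_cases hc : Cov Ω (Di i) v <;> simp [hUdef, hc]
    have hTspec : ∀ i j, (cycleGraph 4).Adj i j → ¬(T i = true ∧ T j = true) := by
      rintro i j hadj ⟨hi, hj⟩
      have hvi : v ∈ Di i := (hTtrue i).1 hi
      have hvj : v ∈ Di j := (hTtrue j).1 hj
      exact hind (i, v) hvi (j, v) hvj (Or.inl ⟨rfl, rfl, hadj⟩)
    have hUspec : ∀ i, U i = true → ∃ j, (cycleGraph 4).Adj i j ∧ T j = true := by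
      intro i hi
      have hnc : ¬ Cov Ω (Di i) v := (hUtrue i).1 hi
      have hc := hcov (i, v) (fun h => hva (congrArg Prod.snd h))
        (fun h => hva (congrArg Prod.snd h))
      rcases hc with h | ⟨⟨j, d⟩, hd, hadj⟩
      · exact absurd (Or.inl h) hnc
      · rcases hadj with ⟨h1, h2, h3⟩ | ⟨h1, h2⟩
        · dsimp only at h2
          subst h2
          exact ⟨j, h3, (hTtrue j).2 hd⟩
        · dsimp only at h1
          subst h1
          exact absurd (Or.inr ⟨d, hd, h2⟩) hnc
    have hsum := c4count T U hTspec hUspec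
    rw [Fin.sum_univ_four] at hsum
    have hUe : ∀ i, (if U i = true then (1 : ℕ) else 0) = (if Cov Ω (Di i) v then 0 else 1) := by
      intro i
      by_cases hc : Cov Ω (Di i) v <;> simp [hUdef, hc]
    rw [hUe 0, hUe 1, hUe 2, hUe 3] at hsum
    have hcard : D.ncard = (Di 0).ncard + (Di 1).ncard + (Di 2).ncard + (Di 3).ncard := by
      rw [ncard_fiber D, Fin.sum_univ_four]
    have l0 := hlb 0
    have l1 := hlb 1
    have l2 := hlb 2
    have l3 := hlb 3
    rw [if_pos hcov0a] at l0
    rw [if_pos hcov2a] at l2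
    have e3 : (if Cov Ω (Di 3) a then (0 : ℕ) else 1)
        = (if Cov (rootedProduct (cycleGraph 4) Ω v) D ((3 : Fin 4), a) then 0 else 1) := by
      refine if_congr ⟨fun hc => cov_lift hc, fun hc => cov_res (Ne.symm hva) hc⟩ rfl rfl
    have e1 : (if Cov Ω (Di 1) a then (0 : ℕ) else 1)
        = (if Cov (rootedProduct (cycleGraph 4) Ω v) D ((1 : Fin 4), a) then 0 else 1) := by
      refine if_congr ⟨fun hc => cov_lift hc, fun hc => cov_res (Ne.symm hva) hc⟩ rfl rfl
    rw [e3] at l3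
    rw [e1] at l1
    omega
  · -- the (in, in) witness
    refine ⟨{p : Fin 4 × β | p.2 ∈ (![Wii, Wui, Wii, Wui]) p.1}, ?_, ?_, ?_, ?_, ?_⟩
    · apply indep_assemble
      · exact forall_fin4 hii_ind hui_ind hii_ind hui_ind
      · intro i j hadj hvi hvj
        fin_cases i <;> fin_cases j <;>
          first
            | exact absurd hadj (by decide)
            | exact hui_v hvi
            | exact hui_v hvj
    · rintro ⟨i, x⟩
      revert x
      refine forall_fin4
        (P := fun i => ∀ x : β,
          Cov (rootedProduct (cycleGraph 4) Ω v)
            {p : Fin 4 × β | p.2 ∈ (![Wii, Wui, Wii, Wui]) p.1} (i, x)) ?_ ?_ ?_ ?_ i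
      · intro x
        exact cov_lift (hii_cov x)
      · intro x
        by_cases hx : x = v
        · subst hx
          exact cov_cross (show (cycleGraph 4).Adj 1 0 by decide) hii_v
        · exact cov_lift (hui_cov x hx)
      · intro x
        exact cov_lift (hii_cov x)
      · intro x
        by_cases hx : x = v
        · subst hx
          exact cov_cross (show (cycleGraph 4).Adj 3 2 by decide) hii_v
        · exact cov_lift (hui_cov x hx)
    · exact hui_a
    · exact hui_a
    · rw [ncard_assemble, Fin.sum_univ_four]
      show Wii.ncard + Wui.ncard + Wii.ncard + Wui.ncard ≤ 4 * A - 2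
      omega
  · -- the (undominated-root, in) witness
    refine ⟨{p : Fin 4 × β | p.2 ∈ (![Wui, Wii, Wui, Wiu]) p.1}, ?_, ?_, ?_, ?_, ?_⟩
    · apply indep_assemble
      · exact forall_fin4 hui_ind hii_ind hui_ind hiu_ind
      · intro i j hadj hvi hvj
        fin_cases i <;> fin_cases j <;>
          first
            | exact absurd hadj (by decide)
            | exact hui_v hvi
            | exact hui_v hvj
    · rintro ⟨i, x⟩
      revert x
      refine forall_fin4
        (P := fun i => ∀ x : β, ((i, x) : Fin 4 × β) ≠ ((3 : Fin 4), a) →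
          Cov (rootedProduct (cycleGraph 4) Ω v)
            {p : Fin 4 × β | p.2 ∈ (![Wui, Wii, Wui, Wiu]) p.1} (i, x)) ?_ ?_ ?_ ?_ i
      · intro x _
        by_cases hx : x = v
        · subst hx
          exact cov_cross (show (cycleGraph 4).Adj 0 1 by decide) hii_v
        · exact cov_lift (hui_cov x hx)
      · intro x _
        exact cov_lift (hii_cov x)
      · intro x _
        by_cases hx : x = v
        · subst hx
          exact cov_cross (show (cycleGraph 4).Adj 2 1 by decide) hii_v
        · exact cov_lift (hui_cov x hx)
      · intro x hxa
        have hxa' : x ≠ a := fun h => hxa (by rw [h])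
        exact cov_lift (hiu_cov x hxa')
    · exact hiu_a
    · exact hii_a
    · rw [ncard_assemble, Fin.sum_univ_four]
      show Wui.ncard + Wii.ncard + Wui.ncard + Wiu.ncard + 1 ≤ 4 * A - 2
      omega
  · -- the (in, undominated-aux) witness
    refine ⟨{p : Fin 4 × β | p.2 ∈ (![Wui, Wiu, Wui, Wii]) p.1}, ?_, ?_, ?_, ?_, ?_⟩
    · apply indep_assemble
      · exact forall_fin4 hui_ind hiu_ind hui_ind hii_ind
      · intro i j hadj hvi hvj
        fin_cases i <;> fin_cases j <;>
          first
            | exact absurd hadj (by decide)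
            | exact hui_v hvi
            | exact hui_v hvj
    · rintro ⟨i, x⟩
      revert x
      refine forall_fin4
        (P := fun i => ∀ x : β, ((i, x) : Fin 4 × β) ≠ ((1 : Fin 4), a) →
          Cov (rootedProduct (cycleGraph 4) Ω v)
            {p : Fin 4 × β | p.2 ∈ (![Wui, Wiu, Wui, Wii]) p.1} (i, x)) ?_ ?_ ?_ ?_ i
      · intro x _
        by_cases hx : x = v
        · subst hx
          exact cov_cross (show (cycleGraph 4).Adj 0 1 by decide) hiu_v
        · exact cov_lift (hui_cov x hx)
      · intro x hxa
        have hxa' : x ≠ a := fun h => hxa (by rw [h])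
        exact cov_lift (hiu_cov x hxa')
      · intro x _
        by_cases hx : x = v
        · subst hx
          exact cov_cross (show (cycleGraph 4).Adj 2 3 by decide) hii_v
        · exact cov_lift (hui_cov x hx)
      · intro x _
        exact cov_lift (hii_cov x)
    · exact hiu_a
    · exact hii_a
    · rw [ncard_assemble, Fin.sum_univ_four]
      show Wui.ncard + Wiu.ncard + Wui.ncard + Wii.ncard + 1 ≤ 4 * A - 2
      omega

end Step

private def Aseq : ℕ → ℕ
  | 0 => 2
  | (l + 1) => 4 * Aseq l - 2

private lemma Aseq_ge : ∀ l, 2 ≤ Aseq l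
  | 0 => le_refl 2
  | (l + 1) => by
      have := Aseq_ge l
      show 2 ≤ 4 * Aseq l - 2
      omega

instance fcnFintype : ∀ l, Fintype (FCNVert l)
  | 0 => inferInstanceAs (Fintype (Fin 4))
  | (l + 1) => @instFintypeProd (Fin 4) (FCNVert l) _ (fcnFintype l)

private lemma root_ne_aux : ∀ l, fcnRoot l ≠ fcnAux l
  | 0 => by
      have hne : (3 : Fin 4) ≠ 1 := by decide
      exact fun h => hne h
  | (l + 1) => by
      intro h
      have h' : (((3 : Fin 4), fcnAux l) : Fin 4 × FCNVert l) = ((1 : Fin 4), fcnAux l) := h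
      have h'' : (3 : Fin 4) = 1 := congrArg Prod.fst h'
      exact absurd h'' (by decide)

private lemma invFCN : ∀ l, InvP (FCN l) (fcnRoot l) (fcnAux l) (Aseq l)
  | 0 => base
  | (l + 1) => step (root_ne_aux l) (Aseq_ge l) (invFCN l)

end Stmt14Aux


theorem stmt14 :
    gammaI (FCN 0) = 2 ∧ ∀ l : ℕ, gammaI (FCN (l + 1)) = 4 * gammaI (FCN l) - 2 := by
  constructor
  · exact Stmt14Aux.gammaI_eq (Stmt14Aux.invFCN 0)
  · intro l
    have h1 : gammaI (FCN (l + 1)) = Stmt14Aux.Aseq (l + 1) :=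
      Stmt14Aux.gammaI_eq (Stmt14Aux.invFCN (l + 1))
    have h2 : gammaI (FCN l) = Stmt14Aux.Aseq l :=
      Stmt14Aux.gammaI_eq (Stmt14Aux.invFCN l)
    rw [h1, h2]
    rfl
end

section
/- The total domination number of FCN(1) equals 8. -/
open SimpleGraph

variable {V : Type*}

private def fcnG : SimpleGraph (Fin 4 × Fin 4) :=
  rootedProduct (cycleGraph 4) (cycleGraph 4) (3 : Fin 4)

private lemma fcn1_adj (a b a' b' : Fin 4) : fcnG.Adj (a,b) (a',b') ↔
    ((b = 3 ∧ b' = 3 ∧ (cycleGraph 4).Adj a a') ∨ (a = a' ∧ (cycleGraph 4).Adj b b')) := Iff.rfl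

private def fcnProj : Fin 4 × Fin 4 → Fin 4 × Fin 2 :=
  fun p => (p.1, ⟨p.2.val % 2, Nat.mod_lt _ (by norm_num)⟩)

private lemma fcn1_lb (D : Set (Fin 4 × Fin 4)) (hD : ∀ u, ∃ d ∈ D, fcnG.Adj u d) :
    8 ≤ D.ncard := by
  have hsurj : ∀ q : Fin 4 × Fin 2, ∃ p ∈ D, fcnProj p = q := by
    rintro ⟨a, i⟩
    fin_cases i
    · obtain ⟨⟨c, e⟩, hd, hadj⟩ := hD (a, 1)
      rw [fcn1_adj] at hadj
      rcases hadj with ⟨h1, _, _⟩ | ⟨h1, h2⟩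
      · exact absurd h1 (by decide)
      · have he : e = 0 ∨ e = 2 := by clear hd; revert h2; revert e; decide
        refine ⟨(c, e), hd, ?_⟩
        subst h1
        rcases he with rfl | rfl <;>
          (simp [fcnProj, Prod.ext_iff, Fin.ext_iff]; try decide)
    · obtain ⟨⟨c, e⟩, hd, hadj⟩ := hD (a, 0)
      rw [fcn1_adj] at hadj
      rcases hadj with ⟨h1, _, _⟩ | ⟨h1, h2⟩
      · exact absurd h1 (by decide)
      · have he : e = 1 ∨ e = 3 := by clear hd; revert h2; revert e; decide
        refine ⟨(c, e), hd, ?_⟩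
        subst h1
        rcases he with rfl | rfl <;>
          (simp [fcnProj, Prod.ext_iff, Fin.ext_iff]; try decide)
  have h1 : fcnProj '' D = Set.univ :=
    Set.eq_univ_of_forall fun q => by
      obtain ⟨p, hp, hq⟩ := hsurj q; exact ⟨p, hp, hq⟩
  calc 8 = (Set.univ : Set (Fin 4 × Fin 2)).ncard := by
        simp [Set.ncard_univ, Nat.card_eq_fintype_card]
    _ = (fcnProj '' D).ncard := by rw [h1]
    _ ≤ D.ncard := Set.ncard_image_le (Set.toFinite D)

private def fcnD : Set (Fin 4 × Fin 4) := {p | p.2 = 0 ∨ p.2 = 1}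

private lemma fcnD_card : fcnD.ncard = 8 := by
  have h : fcnD = ↑((Finset.univ ×ˢ {0, 1} : Finset (Fin 4 × Fin 4))) := by
    ext ⟨a, b⟩
    simp [fcnD, Finset.mem_product]
  rw [h, Set.ncard_coe_finset]
  decide

private lemma fcnD_td : ∀ u : Fin 4 × Fin 4, ∃ d ∈ fcnD, fcnG.Adj u d := by
  rintro ⟨a, b⟩
  fin_cases b
  · exact ⟨(a, 1), Or.inr rfl, Or.inr ⟨rfl, show (cycleGraph 4).Adj 0 1 by decide⟩⟩
  · exact ⟨(a, 0), Or.inl rfl, Or.inr ⟨rfl, show (cycleGraph 4).Adj 1 0 by decide⟩⟩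
  · exact ⟨(a, 1), Or.inr rfl, Or.inr ⟨rfl, show (cycleGraph 4).Adj 2 1 by decide⟩⟩
  · exact ⟨(a, 0), Or.inl rfl, Or.inr ⟨rfl, show (cycleGraph 4).Adj 3 0 by decide⟩⟩

theorem stmt15 : gammaT (FCN 1) = 8 := by
  have key : ∀ D : Set (FCNVert 1), IsTotalDominating (FCN 1) D ↔ ∀ u, ∃ d ∈ D, fcnG.Adj u d :=
    fun D => Iff.rfl
  apply le_antisymm
  · exact Nat.sInf_le ⟨fcnD, (key fcnD).mpr fcnD_td, fcnD_card⟩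
  · refine le_csInf ⟨8, fcnD, (key fcnD).mpr fcnD_td, fcnD_card⟩ ?_
    rintro n ⟨D, hD, rfl⟩
    exact fcn1_lb D ((key D).mp hD)
end

section
/- The double domination number of the fractal cubic network satisfies γ_×2(FCN(1)) = 12 and γ_×2(FCN(l)) = 4·(γ_×2(FCN(l−1)) − 1) for all l ≥ 2. -/
open SimpleGraph

variable {V : Type*}

namespace FCNaux

/-- double domination at a single vertex -/
def DD (G : SimpleGraph V) (S : Set V) (u : V) : Prop :=
  2 ≤ (closedNbhd G u ∩ S).ncard

open scoped Classical in
/-- the "penalty" of a special vertex -/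
noncomputable def kap (G : SimpleGraph V) (v : V) (S : Set V) : ℕ :=
  if v ∈ S then (if (G.neighborSet v ∩ S).ncard = 0 then 0 else 1)
  else (if 2 ≤ (G.neighborSet v ∩ S).ncard then 1 else 2)

def cseq : ℕ → ℕ
  | 0 => 2
  | l + 1 => 4 * cseq l + 2

lemma one_le_kap_of_DD [Fintype V] {G : SimpleGraph V} {S : Set V} {v : V}
    (h : DD G S v) : 1 ≤ kap G v S := by
  classical
  unfold DD at h
  unfold kap
  split_ifs with h1 h2 h3
  · exfalso
    rw [Set.ncard_eq_zero (Set.toFinite _)] at h2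
    have hsub : closedNbhd G v ∩ S ⊆ {v} := by
      rintro x ⟨hx1, hx2⟩
      rcases hx1 with rfl | hx1
      · rfl
      · exact absurd (Set.mem_inter hx1 hx2)
          (by rw [h2]; exact Set.notMem_empty x)
    have h5 := Set.ncard_le_ncard hsub (Set.finite_singleton v)
    rw [Set.ncard_singleton] at h5
    omega
  · exact le_rfl
  · exact le_rfl
  · exfalso
    apply h3
    have he : closedNbhd G v ∩ S = G.neighborSet v ∩ S := by
      ext x
      constructor
      · rintro ⟨hx1, hx2⟩
        rcases hx1 with rfl | hx1
        · exact absurd hx2 h1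
        · exact ⟨hx1, hx2⟩
      · rintro ⟨hx1, hx2⟩
        exact ⟨Set.mem_insert_of_mem _ hx1, hx2⟩
    rw [← he]
    exact h

section RP

variable {β : Type*} {G : SimpleGraph β} {v : β}

/-- the i-th slice of a set of vertices of a rooted product -/
def slice (i : Fin 4) (S : Set (Fin 4 × β)) : Set β := {x | (i, x) ∈ S}

lemma mem_slice {i : Fin 4} {x : β} {S : Set (Fin 4 × β)} :
    x ∈ slice i S ↔ (i, x) ∈ S := Iff.rfl

lemma ncard_eq_sum_slices [Fintype β] (S : Set (Fin 4 × β)) :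
    S.ncard = ∑ i : Fin 4, (slice i S).ncard := by
  classical
  rw [← Nat.card_coe_set_eq]
  have e : S ≃ (Σ i : Fin 4, slice i S) :=
    ⟨fun p => ⟨p.1.1, p.1.2, p.2⟩, fun q => ⟨(q.1, q.2.1), q.2.2⟩,
      fun p => rfl, fun q => rfl⟩
  rw [Nat.card_congr e, Nat.card_eq_fintype_card, Fintype.card_sigma]
  exact Finset.sum_congr rfl fun i _ => by
    rw [← Nat.card_eq_fintype_card, Nat.card_coe_set_eq]

lemma emb_inj (i : Fin 4) : Function.Injective (fun y : β => ((i, y) : Fin 4 × β)) :=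
  fun a b h => by simpa using h

lemma image_inter_eq (i : Fin 4) (A : Set β) (S : Set (Fin 4 × β)) :
    ((fun y : β => ((i, y) : Fin 4 × β)) '' A) ∩ S
      = (fun y : β => ((i, y) : Fin 4 × β)) '' (A ∩ slice i S) := by
  ext p
  obtain ⟨j, y⟩ := p
  constructor
  · rintro ⟨⟨z, hz, hzy⟩, hS⟩
    obtain ⟨rfl, rfl⟩ : i = j ∧ z = y := by simpa [Prod.ext_iff] using hzy
    exact ⟨z, ⟨hz, hS⟩, rfl⟩
  · rintro ⟨z, ⟨hz1, hz2⟩, hzy⟩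
    obtain ⟨rfl, rfl⟩ : i = j ∧ z = y := by simpa [Prod.ext_iff] using hzy
    exact ⟨⟨z, hz1, rfl⟩, hz2⟩

lemma ncard_image_inter (i : Fin 4) (A : Set β) (S : Set (Fin 4 × β)) :
    (((fun y : β => ((i, y) : Fin 4 × β)) '' A) ∩ S).ncard = (A ∩ slice i S).ncard := by
  rw [image_inter_eq, Set.ncard_image_of_injective _ (emb_inj i)]

lemma nbhdSet_nonroot {x : β} (hx : x ≠ v) (i : Fin 4) :
    (rootedProduct (cycleGraph 4) G v).neighborSet (i, x)
      = (fun y : β => ((i, y) : Fin 4 × β)) '' G.neighborSet x := by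
  ext p
  obtain ⟨j, y⟩ := p
  constructor
  · rintro (⟨h1, -, -⟩ | ⟨h1, h2⟩)
    · exact absurd h1 hx
    · obtain rfl : i = j := h1
      exact ⟨y, h2, rfl⟩
  · rintro ⟨z, hz, hzy⟩
    obtain ⟨rfl, rfl⟩ : i = j ∧ z = y := by simpa [Prod.ext_iff] using hzy
    exact Or.inr ⟨rfl, hz⟩

lemma closedNbhd_nonroot {x : β} (hx : x ≠ v) (i : Fin 4) :
    closedNbhd (rootedProduct (cycleGraph 4) G v) (i, x)
      = (fun y : β => ((i, y) : Fin 4 × β)) '' closedNbhd G x := by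
  unfold closedNbhd
  rw [nbhdSet_nonroot hx i, Set.image_insert_eq]

lemma DD_transfer {x : β} (hx : x ≠ v) (i : Fin 4) (S : Set (Fin 4 × β)) :
    DD (rootedProduct (cycleGraph 4) G v) S (i, x) ↔ DD G (slice i S) x := by
  unfold DD
  rw [closedNbhd_nonroot hx i, ncard_image_inter]

lemma kap_transfer {x : β} (hx : x ≠ v) (i : Fin 4) (S : Set (Fin 4 × β)) :
    kap (rootedProduct (cycleGraph 4) G v) (i, x) S = kap G x (slice i S) := by
  classical
  unfold kap
  rw [nbhdSet_nonroot hx i, ncard_image_inter]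
  rfl

lemma adj_roots (i : Fin 4) :
    (rootedProduct (cycleGraph 4) G v).Adj (i, v) (i + 1, v) := by
  have h : ∀ j : Fin 4, (cycleGraph 4).Adj j (j + 1) := by decide
  exact Or.inl ⟨rfl, rfl, h i⟩

lemma DD_root_pair [Fintype β] {S : Set (Fin 4 × β)} (i : Fin 4)
    (h1 : (i, v) ∈ S) (h2 : ((i + 1 : Fin 4), v) ∈ S) :
    DD (rootedProduct (cycleGraph 4) G v) S (i, v) := by
  have hne0 : ∀ j : Fin 4, j ≠ j + 1 := by decide
  have hne : ((i, v) : Fin 4 × β) ≠ (i + 1, v) := fun h => hne0 i (congrArg Prod.fst h)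
  have hsub : ({(i, v), ((i + 1 : Fin 4), v)} : Set (Fin 4 × β))
      ⊆ closedNbhd (rootedProduct (cycleGraph 4) G v) (i, v) ∩ S := by
    rintro p (rfl | rfl)
    · exact ⟨Set.mem_insert _ _, h1⟩
    · exact ⟨Set.mem_insert_of_mem _ (adj_roots i), h2⟩
  calc 2 = ({(i, v), ((i + 1 : Fin 4), v)} : Set (Fin 4 × β)).ncard :=
        (Set.ncard_pair hne).symm
    _ ≤ _ := Set.ncard_le_ncard hsub (Set.toFinite _)

/-- glue four slice sets into a set of the rooted product -/
def glue (T : Fin 4 → Set β) : Set (Fin 4 × β) := {p | p.2 ∈ T p.1}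

lemma slice_glue (i : Fin 4) (T : Fin 4 → Set β) : slice i (glue T) = T i := rfl

lemma mem_glue {i : Fin 4} {x : β} {T : Fin 4 → Set β} :
    (i, x) ∈ glue T ↔ x ∈ T i := Iff.rfl

lemma DD_glue_of [Fintype β] {T : Fin 4 → Set β} (hroot : ∀ i, v ∈ T i)
    {i : Fin 4} {x : β} (h : x ≠ v → DD G (T i) x) :
    DD (rootedProduct (cycleGraph 4) G v) (glue T) (i, x) := by
  by_cases hx : x = v
  · subst hx
    exact DD_root_pair i (hroot i) (hroot (i + 1))
  · exact (DD_transfer hx i (glue T)).mpr (by rw [slice_glue]; exact h hx)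

end RP

section C4

lemma closedNbhd_C4_coe (x : Fin 4) :
    closedNbhd (cycleGraph 4) x = (↑({x - 1, x, x + 1} : Finset (Fin 4)) : Set (Fin 4)) := by
  have hadj : ∀ a b : Fin 4, (cycleGraph 4).Adj a b ↔ (b = a - 1 ∨ b = a + 1) := by decide
  ext y
  simp only [closedNbhd, Set.mem_insert_iff, mem_neighborSet, hadj, Finset.coe_insert,
    Set.mem_insert_iff, Finset.coe_singleton, Set.mem_singleton_iff]
  tauto

lemma nbhdSet_C4_aux_coe :
    (cycleGraph 4).neighborSet 1 = (↑({0, 2} : Finset (Fin 4)) : Set (Fin 4)) := by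
  have hadj : ∀ b : Fin 4, (cycleGraph 4).Adj 1 b ↔ (b = 0 ∨ b = 2) := by decide
  ext y
  simp only [mem_neighborSet, hadj, Finset.coe_insert, Set.mem_insert_iff,
    Finset.coe_singleton, Set.mem_singleton_iff]

lemma DD_C4_coe (x : Fin 4) (F : Finset (Fin 4)) :
    DD (cycleGraph 4) (↑F) x ↔ 2 ≤ (({x - 1, x, x + 1} : Finset (Fin 4)) ∩ F).card := by
  unfold DD
  rw [closedNbhd_C4_coe, ← Finset.coe_inter, Set.ncard_coe_finset]

/-- Finset version of kap at vertex 1 of C4 -/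
def kapF (F : Finset (Fin 4)) : ℕ :=
  if 1 ∈ F then (if (({0, 2} : Finset (Fin 4)) ∩ F).card = 0 then 0 else 1)
  else (if 2 ≤ (({0, 2} : Finset (Fin 4)) ∩ F).card then 1 else 2)

lemma kap_C4_coe (F : Finset (Fin 4)) :
    kap (cycleGraph 4) 1 (↑F) = kapF F := by
  classical
  unfold kap kapF
  rw [nbhdSet_C4_aux_coe, ← Finset.coe_inter, Set.ncard_coe_finset]
  simp [Finset.mem_coe]

lemma C4a {T : Set (Fin 4)} (h0 : DD (cycleGraph 4) T 0) (h1 : DD (cycleGraph 4) T 1)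
    (h2 : DD (cycleGraph 4) T 2) : 3 ≤ T.ncard := by
  classical
  obtain ⟨F, rfl⟩ : ∃ F : Finset (Fin 4), T = ↑F := ⟨T.toFinset, T.coe_toFinset.symm⟩
  rw [DD_C4_coe] at h0 h1 h2
  rw [Set.ncard_coe_finset]
  revert h0 h1 h2
  revert F
  decide

lemma C4b {T : Set (Fin 4)} (h0 : DD (cycleGraph 4) T 0) (h2 : DD (cycleGraph 4) T 2) :
    2 + kap (cycleGraph 4) 1 T ≤ T.ncard := by
  classical
  obtain ⟨F, rfl⟩ : ∃ F : Finset (Fin 4), T = ↑F := ⟨T.toFinset, T.coe_toFinset.symm⟩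
  rw [DD_C4_coe] at h0 h2
  rw [Set.ncard_coe_finset, kap_C4_coe]
  revert h0 h2
  revert F
  decide

end C4

section Main

instance decEqFCNVert : ∀ l, DecidableEq (FCNVert l)
  | 0 => inferInstanceAs (DecidableEq (Fin 4))
  | (l + 1) => letI := decEqFCNVert l; inferInstanceAs (DecidableEq (Fin 4 × FCNVert l))

instance fintypeFCNVert : ∀ l, Fintype (FCNVert l)
  | 0 => inferInstanceAs (Fintype (Fin 4))
  | (l + 1) => letI := fintypeFCNVert l; inferInstanceAs (Fintype (Fin 4 × FCNVert l))

lemma FCN_succ (l : ℕ) :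
    FCN (l + 1) = rootedProduct (cycleGraph 4) (FCN l) (fcnRoot l) := rfl

lemma fcnRoot_succ (l : ℕ) : fcnRoot (l + 1) = ((3 : Fin 4), fcnAux l) := rfl

lemma fcnAux_succ (l : ℕ) : fcnAux (l + 1) = ((1 : Fin 4), fcnAux l) := rfl

lemma aux_ne_root : ∀ l, fcnAux l ≠ fcnRoot l
  | 0 => by decide
  | (l + 1) => fun h => by
      have := congrArg Prod.fst h
      simp only [fcnAux_succ, fcnRoot_succ] at this
      exact absurd this (by decide)

lemma FCN_zero : FCN 0 = cycleGraph 4 := rfl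

/-- main lower bound -/
lemma lower : ∀ l, ∀ S : Set (FCNVert (l + 1)),
    (∀ u, u ≠ fcnRoot (l + 1) → u ≠ fcnAux (l + 1) → DD (FCN (l + 1)) S u) →
    cseq (l + 1) + kap (FCN (l + 1)) (fcnAux (l + 1)) S ≤ S.ncard := by
  intro l
  induction l with
  | zero =>
    intro S h
    have tr : ∀ i x : Fin 4, x ≠ 3 → ((i, x) : Fin 4 × Fin 4) ≠ (3, 1) →
        ((i, x) : Fin 4 × Fin 4) ≠ (1, 1) → DD (cycleGraph 4) (slice i S) x := by
      intro i x hx h1 h2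
      exact (DD_transfer (v := fcnRoot 0) hx i S).mp (h (i, x) h1 h2)
    have c0 : 3 ≤ (slice (β := Fin 4) 0 S).ncard :=
      C4a (tr 0 0 (by decide) (by decide) (by decide))
        (tr 0 1 (by decide) (by decide) (by decide))
        (tr 0 2 (by decide) (by decide) (by decide))
    have c2 : 3 ≤ (slice (β := Fin 4) 2 S).ncard :=
      C4a (tr 2 0 (by decide) (by decide) (by decide))
        (tr 2 1 (by decide) (by decide) (by decide))
        (tr 2 2 (by decide) (by decide) (by decide))
    have c1 : 2 + kap (cycleGraph 4) 1 (slice 1 S) ≤ (slice (β := Fin 4) 1 S).ncard :=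
      C4b (tr 1 0 (by decide) (by decide) (by decide))
        (tr 1 2 (by decide) (by decide) (by decide))
    have c3 : 2 ≤ (slice (β := Fin 4) 3 S).ncard := by
      have := C4b (tr 3 0 (by decide) (by decide) (by decide))
        (tr 3 2 (by decide) (by decide) (by decide))
      omega
    have hk : kap (FCN 1) (fcnAux 1) S = kap (cycleGraph 4) 1 (slice 1 S) :=
      kap_transfer (v := fcnRoot 0) (by decide) 1 S
    erw [ncard_eq_sum_slices (β := Fin 4) S]; rw [Fin.sum_univ_four, hk]
    have : cseq (0 + 1) = 10 := rfl
    omega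
  | succ l ih =>
    intro S h
    have h31 : (3 : Fin 4) ≠ 1 := by decide
    have h01 : (0 : Fin 4) ≠ 1 := by decide
    have h03 : (0 : Fin 4) ≠ 3 := by decide
    have h21 : (2 : Fin 4) ≠ 1 := by decide
    have h23 : (2 : Fin 4) ≠ 3 := by decide
    have h13 : (1 : Fin 4) ≠ 3 := by decide
    -- transfer of hypothesis to slices
    have tr : ∀ (i : Fin 4) (x : FCNVert (l + 1)), x ≠ fcnRoot (l + 1) →
        ((i, x) : FCNVert (l + 2)) ≠ fcnRoot (l + 2) →
        ((i, x) : FCNVert (l + 2)) ≠ fcnAux (l + 2) →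
        DD (FCN (l + 1)) (slice i S) x := by
      intro i x hx h1 h2
      exact (DD_transfer (v := fcnRoot (l + 1)) hx i S).mp (h (i, x) h1 h2)
    -- copies 0 and 2 : IH + aux dominated
    have hcopy : ∀ i : Fin 4, i ≠ 1 → i ≠ 3 →
        cseq (l + 1) + 1 ≤ (slice i S).ncard := by
      intro i hi1 hi3
      have hIH := ih (slice i S) (fun u h1 h2 => tr i u h1
        (fun he => hi3 (by simpa [fcnRoot_succ] using congrArg Prod.fst he))
        (fun he => hi1 (by simpa [fcnAux_succ] using congrArg Prod.fst he)))
      have hdom : DD (FCN (l + 1)) (slice i S) (fcnAux (l + 1)) :=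
        tr i (fcnAux (l + 1)) (aux_ne_root (l + 1))
          (fun he => hi3 (by simpa [fcnRoot_succ] using congrArg Prod.fst he))
          (fun he => hi1 (by simpa [fcnAux_succ] using congrArg Prod.fst he))
      have := one_le_kap_of_DD hdom
      omega
    have c0 := hcopy 0 h01 h03
    have c2 := hcopy 2 h21 h23
    -- copy 1 : IH
    have c1 : cseq (l + 1) + kap (FCN (l + 1)) (fcnAux (l + 1)) (slice 1 S)
        ≤ (slice 1 S).ncard := by
      apply ih (slice 1 S)
      intro u h1 h2
      apply tr 1 u h1
      · exact fun he => h13 (by simpa [fcnRoot_succ] using congrArg Prod.fst he)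
      · exact fun he => h2 (by simpa [fcnAux_succ, Prod.ext_iff] using he)
    -- copy 3 : IH
    have c3 : cseq (l + 1) ≤ (slice 3 S).ncard := by
      have hIH := ih (slice 3 S) ?_
      · omega
      intro u h1 h2
      apply tr 3 u h1
      · exact fun he => h2 (by simpa [fcnRoot_succ, Prod.ext_iff] using he)
      · exact fun he => h31 (by simpa [fcnAux_succ] using congrArg Prod.fst he)
    have hk : kap (FCN (l + 2)) (fcnAux (l + 2)) S
        = kap (FCN (l + 1)) (fcnAux (l + 1)) (slice 1 S) :=
      kap_transfer (v := fcnRoot (l + 1)) (aux_ne_root (l + 1)) 1 S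
    erw [ncard_eq_sum_slices S]; rw [Fin.sum_univ_four, hk]
    have hc : cseq (l + 1 + 1) = 4 * cseq (l + 1) + 2 := rfl
    omega

end Main

section Constructions

/-- base slice sets -/
def FA : Set (Fin 4) := (↑({3, 0, 1} : Finset (Fin 4)) : Set (Fin 4))
def FB : Set (Fin 4) := (↑({3, 1} : Finset (Fin 4)) : Set (Fin 4))

lemma DDFA : ∀ x : Fin 4, x ≠ 3 → DD (cycleGraph 4) FA x := by
  intro x hx
  rw [FA, DD_C4_coe]
  revert hx; revert x; decide

lemma DDFB : ∀ x : Fin 4, x ≠ 3 → x ≠ 1 → DD (cycleGraph 4) FB x := by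
  intro x hx hx1
  rw [FB, DD_C4_coe]
  revert hx1; revert hx; revert x; decide

lemma mem3FA : (3 : Fin 4) ∈ FA := by rw [FA]; decide
lemma mem3FB : (3 : Fin 4) ∈ FB := by rw [FB]; decide
lemma mem1FB : (1 : Fin 4) ∈ FB := by rw [FB]; decide
lemma ncardFA : FA.ncard = 3 := by rw [FA, Set.ncard_coe_finset]; decide
lemma ncardFB : FB.ncard = 2 := by rw [FB, Set.ncard_coe_finset]; decide

/-- the two "deficient" double dominating set properties -/
def IsUb (l : ℕ) (S : Set (FCNVert l)) : Prop :=
  fcnRoot l ∈ S ∧ (∀ u, u ≠ fcnRoot l → DD (FCN l) S u) ∧ S.ncard = cseq l + 1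

def IsUg (l : ℕ) (S : Set (FCNVert l)) : Prop :=
  fcnRoot l ∈ S ∧ fcnAux l ∈ S ∧
    (∀ u, u ≠ fcnRoot l → u ≠ fcnAux l → DD (FCN l) S u) ∧ S.ncard = cseq l

lemma UbUg : ∀ l, (∃ S, IsUb (l + 1) S) ∧ (∃ S, IsUg (l + 1) S) := by
  intro l
  induction l with
  | zero =>
    constructor
    · refine ⟨glue (fun i => if i = 3 then FB else FA), ?_, ?_, ?_⟩
      · show (1 : Fin 4) ∈ (if (3 : Fin 4) = 3 then FB else FA)
        rw [if_pos rfl]; exact mem1FB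
      · rintro ⟨i, x⟩ hne
        apply DD_glue_of (G := cycleGraph 4) (v := fcnRoot 0)
        · intro j
          show (3 : Fin 4) ∈ (if j = 3 then FB else FA)
          split_ifs
          · exact mem3FB
          · exact mem3FA
        · intro hx
          by_cases hi : i = 3
          · subst hi
            show DD (cycleGraph 4) (if (3 : Fin 4) = 3 then FB else FA) x
            rw [if_pos rfl]
            refine DDFB x hx fun h1 => hne ?_
            rw [h1]; rfl
          · show DD (cycleGraph 4) (if i = 3 then FB else FA) x
            rw [if_neg hi]
            exact DDFA x hx
      · erw [ncard_eq_sum_slices]; rw [Fin.sum_univ_four]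
        simp only [slice_glue]
        have e0 : (if (0 : Fin 4) = 3 then FB else FA) = FA := if_neg (by decide)
        have e1 : (if (1 : Fin 4) = 3 then FB else FA) = FA := if_neg (by decide)
        have e2 : (if (2 : Fin 4) = 3 then FB else FA) = FA := if_neg (by decide)
        have e3 : (if (3 : Fin 4) = 3 then FB else FA) = FB := if_pos rfl
        have h10 : cseq (0 + 1) = 10 := rfl
        simp only [e0, e1, e2, e3, true_or, or_true, if_true, h10]
        erw [ncardFA, ncardFB]
    · refine ⟨glue (fun i => if i = 1 ∨ i = 3 then FB else FA), ?_, ?_, ?_, ?_⟩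
      · show (1 : Fin 4) ∈ (if (3 : Fin 4) = 1 ∨ (3 : Fin 4) = 3 then FB else FA)
        rw [if_pos (Or.inr rfl)]; exact mem1FB
      · show (1 : Fin 4) ∈ (if (1 : Fin 4) = 1 ∨ (1 : Fin 4) = 3 then FB else FA)
        rw [if_pos (Or.inl rfl)]; exact mem1FB
      · rintro ⟨i, x⟩ hne hne2
        apply DD_glue_of (G := cycleGraph 4) (v := fcnRoot 0)
        · intro j
          show (3 : Fin 4) ∈ (if j = 1 ∨ j = 3 then FB else FA)
          split_ifs
          · exact mem3FB
          · exact mem3FA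
        · intro hx
          show DD (cycleGraph 4) (if i = 1 ∨ i = 3 then FB else FA) x
          by_cases hi : i = 1 ∨ i = 3
          · rw [if_pos hi]
            refine DDFB x hx fun h1 => ?_
            rcases hi with rfl | rfl
            · exact hne2 (by rw [h1]; rfl)
            · exact hne (by rw [h1]; rfl)
          · rw [if_neg hi]
            exact DDFA x hx
      · erw [ncard_eq_sum_slices]; rw [Fin.sum_univ_four]
        simp only [slice_glue]
        have e0 : (if (0 : Fin 4) = 1 ∨ (0 : Fin 4) = 3 then FB else FA) = FA := if_neg (by decide)
        have e1 : (if (1 : Fin 4) = 1 ∨ (1 : Fin 4) = 3 then FB else FA) = FB := if_pos (by decide)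
        have e2 : (if (2 : Fin 4) = 1 ∨ (2 : Fin 4) = 3 then FB else FA) = FA := if_neg (by decide)
        have e3 : (if (3 : Fin 4) = 1 ∨ (3 : Fin 4) = 3 then FB else FA) = FB := if_pos (by decide)
        have h10 : cseq (0 + 1) = 10 := rfl
        simp only [e0, e1, e2, e3, true_or, or_true, if_true, h10]
        erw [ncardFA, ncardFB]
  | succ l ih =>
    obtain ⟨⟨Sb, hbR, hbD, hbC⟩, ⟨Sg, hgR, hgA, hgD, hgC⟩⟩ := ih
    have hc : cseq (l + 1 + 1) = 4 * cseq (l + 1) + 2 := rfl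
    constructor
    · refine ⟨glue (fun i => if i = 3 then Sg else Sb), ?_, ?_, ?_⟩
      · show fcnAux (l + 1) ∈ (if (3 : Fin 4) = 3 then Sg else Sb)
        rw [if_pos rfl]; exact hgA
      · rintro ⟨i, x⟩ hne
        apply DD_glue_of (G := FCN (l + 1)) (v := fcnRoot (l + 1))
        · intro j
          show fcnRoot (l + 1) ∈ (if j = 3 then Sg else Sb)
          split_ifs
          · exact hgR
          · exact hbR
        · intro hx
          by_cases hi : i = 3
          · subst hi
            show DD (FCN (l + 1)) (if (3 : Fin 4) = 3 then Sg else Sb) x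
            rw [if_pos rfl]
            refine hgD x hx fun h1 => hne ?_
            rw [fcnRoot_succ, h1]
          · show DD (FCN (l + 1)) (if i = 3 then Sg else Sb) x
            rw [if_neg hi]
            exact hbD x hx
      · erw [ncard_eq_sum_slices]; rw [Fin.sum_univ_four]
        simp only [slice_glue]
        have e0 : (if (0 : Fin 4) = 3 then Sg else Sb) = Sb := if_neg (by decide)
        have e1 : (if (1 : Fin 4) = 3 then Sg else Sb) = Sb := if_neg (by decide)
        have e2 : (if (2 : Fin 4) = 3 then Sg else Sb) = Sb := if_neg (by decide)
        have e3 : (if (3 : Fin 4) = 3 then Sg else Sb) = Sg := if_pos rfl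
        simp only [e0, e1, e2, e3, true_or, or_true, if_true, hbC, hgC, hc]
        omega
    · refine ⟨glue (fun i => if i = 1 ∨ i = 3 then Sg else Sb), ?_, ?_, ?_, ?_⟩
      · show fcnAux (l + 1) ∈ (if (3 : Fin 4) = 1 ∨ (3 : Fin 4) = 3 then Sg else Sb)
        rw [if_pos (Or.inr rfl)]; exact hgA
      · show fcnAux (l + 1) ∈ (if (1 : Fin 4) = 1 ∨ (1 : Fin 4) = 3 then Sg else Sb)
        rw [if_pos (Or.inl rfl)]; exact hgA
      · rintro ⟨i, x⟩ hne hne2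
        apply DD_glue_of (G := FCN (l + 1)) (v := fcnRoot (l + 1))
        · intro j
          show fcnRoot (l + 1) ∈ (if j = 1 ∨ j = 3 then Sg else Sb)
          split_ifs
          · exact hgR
          · exact hbR
        · intro hx
          show DD (FCN (l + 1)) (if i = 1 ∨ i = 3 then Sg else Sb) x
          by_cases hi : i = 1 ∨ i = 3
          · rw [if_pos hi]
            refine hgD x hx fun h1 => ?_
            rcases hi with rfl | rfl
            · exact hne2 (by rw [fcnAux_succ, h1])
            · exact hne (by rw [fcnRoot_succ, h1])
          · rw [if_neg hi]
            exact hbD x hx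
      · erw [ncard_eq_sum_slices]; rw [Fin.sum_univ_four]
        simp only [slice_glue]
        have e0 : (if (0 : Fin 4) = 1 ∨ (0 : Fin 4) = 3 then Sg else Sb) = Sb := if_neg (by decide)
        have e1 : (if (1 : Fin 4) = 1 ∨ (1 : Fin 4) = 3 then Sg else Sb) = Sg := if_pos (by decide)
        have e2 : (if (2 : Fin 4) = 1 ∨ (2 : Fin 4) = 3 then Sg else Sb) = Sb := if_neg (by decide)
        have e3 : (if (3 : Fin 4) = 1 ∨ (3 : Fin 4) = 3 then Sg else Sb) = Sg := if_pos (by decide)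
        simp only [e0, e1, e2, e3, true_or, or_true, if_true, hbC, hgC, hc]
        omega

lemma exists_Ua : ∀ l, ∃ S : Set (FCNVert (l + 1)),
    (∀ u, DD (FCN (l + 1)) S u) ∧ S.ncard = cseq (l + 1) + 2 := by
  intro l
  cases l with
  | zero =>
    refine ⟨glue (fun _ => FA), ?_, ?_⟩
    · rintro ⟨i, x⟩
      apply DD_glue_of (G := cycleGraph 4) (v := fcnRoot 0)
      · intro j; exact mem3FA
      · intro hx; exact DDFA x hx
    · erw [ncard_eq_sum_slices]; rw [Fin.sum_univ_four]
      simp only [slice_glue]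
      erw [ncardFA]
      have h10 : cseq (0 + 1) = 10 := rfl
      omega
  | succ l =>
    obtain ⟨⟨Sb, hbR, hbD, hbC⟩, -⟩ := UbUg l
    refine ⟨glue (fun _ => Sb), ?_, ?_⟩
    · rintro ⟨i, x⟩
      apply DD_glue_of (G := FCN (l + 1)) (v := fcnRoot (l + 1))
      · intro j; exact hbR
      · intro hx; exact hbD x hx
    · erw [ncard_eq_sum_slices]; rw [Fin.sum_univ_four]
      simp only [slice_glue, hbC]
      have hc : cseq (l + 1 + 1) = 4 * cseq (l + 1) + 2 := rfl
      omega

end Constructions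

section Gamma

lemma gamma_lower : ∀ l (D : Set (FCNVert (l + 1))),
    (∀ u, DD (FCN (l + 1)) D u) → cseq (l + 1) + 2 ≤ D.ncard := by
  intro l D h
  cases l with
  | zero =>
    have tr : ∀ i x : Fin 4, x ≠ 3 → DD (cycleGraph 4) (slice i D) x := by
      intro i x hx
      exact (DD_transfer (v := fcnRoot 0) hx i D).mp (h (i, x))
    have hcard : ∀ i : Fin 4, 3 ≤ (slice i D).ncard := fun i =>
      C4a (tr i 0 (by decide)) (tr i 1 (by decide)) (tr i 2 (by decide))
    erw [ncard_eq_sum_slices D]; rw [Fin.sum_univ_four]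
    have h0 := hcard 0; have h1 := hcard 1; have h2 := hcard 2; have h3 := hcard 3
    have : cseq (0 + 1) = 10 := rfl
    omega
  | succ l =>
    have tr : ∀ (i : Fin 4) (x : FCNVert (l + 1)), x ≠ fcnRoot (l + 1) →
        DD (FCN (l + 1)) (slice i D) x := by
      intro i x hx
      exact (DD_transfer (v := fcnRoot (l + 1)) hx i D).mp (h (i, x))
    have hcard : ∀ i : Fin 4, cseq (l + 1) + 1 ≤ (slice i D).ncard := by
      intro i
      have hlow := lower l (slice i D) (fun u h1 _ => tr i u h1)
      have hdom : DD (FCN (l + 1)) (slice i D) (fcnAux (l + 1)) :=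
        tr i (fcnAux (l + 1)) (aux_ne_root (l + 1))
      have := one_le_kap_of_DD hdom
      omega
    erw [ncard_eq_sum_slices D]; rw [Fin.sum_univ_four]
    have h0 := hcard 0; have h1 := hcard 1; have h2 := hcard 2; have h3 := hcard 3
    have hc : cseq (l + 1 + 1) = 4 * cseq (l + 1) + 2 := rfl
    omega

end Gamma

section Final

lemma gammaX2_FCN (l : ℕ) : gammaX2 (FCN (l + 1)) = cseq (l + 1) + 2 := by
  obtain ⟨S, hS, hcard⟩ := exists_Ua l
  have hmem : cseq (l + 1) + 2 ∈
      {n : ℕ | ∃ D : Set (FCNVert (l + 1)), IsDoubleDominating (FCN (l + 1)) D ∧ D.ncard = n} :=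
    ⟨S, hS, hcard⟩
  refine le_antisymm (Nat.sInf_le hmem) ?_
  obtain ⟨D, hD, hDc⟩ := Nat.sInf_mem (⟨_, hmem⟩ :
    Set.Nonempty {n : ℕ | ∃ D : Set (FCNVert (l + 1)),
      IsDoubleDominating (FCN (l + 1)) D ∧ D.ncard = n})
  have hlow := gamma_lower l D hD
  rw [hDc] at hlow
  exact hlow

end Final

end FCNaux

theorem stmt18 :
    gammaX2 (FCN 1) = 12 ∧
    ∀ l : ℕ, 2 ≤ l → gammaX2 (FCN l) = 4 * (gammaX2 (FCN (l - 1)) - 1) := by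
  constructor
  · have h := FCNaux.gammaX2_FCN 0
    rw [h]; rfl
  · intro l hl
    obtain ⟨k, rfl⟩ : ∃ k, l = k + 2 := ⟨l - 2, by omega⟩
    have h1 := FCNaux.gammaX2_FCN (k + 1)
    have h2 := FCNaux.gammaX2_FCN k
    have hs : k + 2 - 1 = k + 1 := rfl
    rw [hs, h2]
    have he : (k + 1) + 1 = k + 2 := rfl
    rw [he] at h1
    rw [h1]
    have hc : FCNaux.cseq (k + 2) = 4 * FCNaux.cseq (k + 1) + 2 := rfl
    omega
end

section
/- The 2-domination number of the fractal cubic network satisfies γ_2(FCN(l)) = 4·γ_2(FCN(l−1)) for all l ≥ 1, where γ_2(FCN(0)) = 2. -/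
open SimpleGraph

variable {V : Type*}

section Stmt19Aux

instance FCNVert.finite : ∀ l, Finite (FCNVert l)
  | 0 => inferInstanceAs (Finite (Fin 4))
  | (l + 1) => haveI := FCNVert.finite l; inferInstanceAs (Finite (Fin 4 × FCNVert l))

/-- relaxed 2-domination: vertices in `S` are exempt. -/
def TwoDomExc (G : SimpleGraph V) (S D : Set V) : Prop :=
  ∀ u : V, u ∉ D → u ∉ S → 2 ≤ (G.neighborSet u ∩ D).ncard

lemma mk_injective {β : Type*} (i : Fin 4) :
    Function.Injective (Prod.mk i : β → Fin 4 × β) :=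
  fun _ _ h => (Prod.ext_iff.mp h).2

lemma slices {β : Type*} [Finite β] (D : Set (Fin 4 × β)) :
    D.ncard = {x | ((0 : Fin 4), x) ∈ D}.ncard + {x | ((1 : Fin 4), x) ∈ D}.ncard
      + {x | ((2 : Fin 4), x) ∈ D}.ncard + {x | ((3 : Fin 4), x) ∈ D}.ncard := by
  have hrep : D = (Prod.mk 0 '' {x | ((0 : Fin 4), x) ∈ D})
      ∪ ((Prod.mk 1 '' {x | ((1 : Fin 4), x) ∈ D})
      ∪ ((Prod.mk 2 '' {x | ((2 : Fin 4), x) ∈ D})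
      ∪ (Prod.mk 3 '' {x | ((3 : Fin 4), x) ∈ D}))) := by
    ext ⟨i, x⟩
    simp only [Set.mem_union, Set.mem_image, Set.mem_setOf_eq, Prod.mk.injEq]
    constructor
    · intro h
      fin_cases i
      · exact Or.inl ⟨x, h, rfl, rfl⟩
      · exact Or.inr (Or.inl ⟨x, h, rfl, rfl⟩)
      · exact Or.inr (Or.inr (Or.inl ⟨x, h, rfl, rfl⟩))
      · exact Or.inr (Or.inr (Or.inr ⟨x, h, rfl, rfl⟩))
    · rintro (⟨y, hy, rfl, rfl⟩ | ⟨y, hy, rfl, rfl⟩ | ⟨y, hy, rfl, rfl⟩ | ⟨y, hy, rfl, rfl⟩) <;>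
        exact hy
  have hdisj : ∀ (i j : Fin 4), i ≠ j → ∀ (A B : Set β),
      Disjoint (Prod.mk i '' A) (Prod.mk j '' B) := by
    intro i j hij A B
    rw [Set.disjoint_left]
    rintro _ ⟨a, _, rfl⟩ ⟨b, _, hb⟩
    exact hij ((Prod.ext_iff.mp hb).1).symm
  conv_lhs => rw [hrep]
  rw [Set.ncard_union_eq (by
      refine Set.disjoint_union_right.mpr ⟨hdisj _ _ (by decide) _ _, ?_⟩
      exact Set.disjoint_union_right.mpr ⟨hdisj _ _ (by decide) _ _, hdisj _ _ (by decide) _ _⟩)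
    (Set.toFinite _) (Set.toFinite _)]
  rw [Set.ncard_union_eq (by
      exact Set.disjoint_union_right.mpr ⟨hdisj _ _ (by decide) _ _, hdisj _ _ (by decide) _ _⟩)
    (Set.toFinite _) (Set.toFinite _)]
  rw [Set.ncard_union_eq (hdisj _ _ (by decide) _ _) (Set.toFinite _) (Set.toFinite _)]
  simp only [Set.ncard_image_of_injective _ (mk_injective _)]
  ring

lemma nbhd_copy {l : ℕ} {i : Fin 4} {x : FCNVert l} (hx : x ≠ fcnRoot l) :
    (FCN (l + 1)).neighborSet (i, x) = Prod.mk i '' ((FCN l).neighborSet x) := by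
  ext ⟨j, y⟩
  show _ ↔ ∃ z, (FCN l).Adj x z ∧ (i, z) = (j, y)
  show (rootedProduct (cycleGraph 4) (FCN l) (fcnRoot l)).Adj (i, x) (j, y) ↔ _
  constructor
  · rintro (⟨h1, _, _⟩ | ⟨h1, h2⟩)
    · exact absurd h1 hx
    · exact ⟨y, h2, Prod.ext h1 rfl⟩
  · rintro ⟨z, hz, hzy⟩
    obtain ⟨rfl, rfl⟩ := Prod.ext_iff.mp hzy
    exact Or.inr ⟨rfl, hz⟩

lemma base_upper : ∃ D : Set (Fin 4), IsTwoDominating (cycleGraph 4) D ∧ D.ncard = 2 := by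
  refine ⟨{0, 2}, ?_, Set.ncard_pair (by decide)⟩
  intro u hu
  have hsub : ({0, 2} : Set (Fin 4)) ⊆ (cycleGraph 4).neighborSet u ∩ {0, 2} := by
    fin_cases u
    · exact absurd (by exact Or.inl rfl) hu
    · rintro v (rfl | rfl)
      · exact ⟨show (cycleGraph 4).Adj 1 0 by decide, Or.inl rfl⟩
      · exact ⟨show (cycleGraph 4).Adj 1 2 by decide, Or.inr rfl⟩
    · exact absurd (by exact Or.inr rfl) hu
    · rintro v (rfl | rfl)
      · exact ⟨show (cycleGraph 4).Adj 3 0 by decide, Or.inl rfl⟩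
      · exact ⟨show (cycleGraph 4).Adj 3 2 by decide, Or.inr rfl⟩
  calc (2 : ℕ) = ({0, 2} : Set (Fin 4)).ncard := (Set.ncard_pair (by decide)).symm
    _ ≤ _ := Set.ncard_le_ncard hsub (Set.toFinite _)

lemma base_lower (D : Set (Fin 4)) (hD : TwoDomExc (cycleGraph 4) {3, 1} D) :
    2 ≤ D.ncard := by
  have hle : ∀ u : Fin 4, u ∉ D → u ∉ ({3, 1} : Set (Fin 4)) → 2 ≤ D.ncard := by
    intro u hu hS
    calc 2 ≤ ((cycleGraph 4).neighborSet u ∩ D).ncard := hD u hu hS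
      _ ≤ D.ncard := Set.ncard_le_ncard Set.inter_subset_right (Set.toFinite _)
  by_cases h0 : (0 : Fin 4) ∈ D
  · by_cases h2 : (2 : Fin 4) ∈ D
    · exact (Set.one_lt_ncard (Set.toFinite _)).mpr ⟨0, h0, 2, h2, by decide⟩
    · refine hle 2 h2 ?_
      rintro (h | h) <;> exact absurd h (by decide)
  · refine hle 0 h0 ?_
    rintro (h | h) <;> exact absurd h (by decide)

lemma fcn_main : ∀ l : ℕ,
    (∃ D : Set (FCNVert l), IsTwoDominating (FCN l) D ∧ D.ncard = 2 * 4 ^ l) ∧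
    (∀ D : Set (FCNVert l),
      TwoDomExc (FCN l) {fcnRoot l, fcnAux l} D → 2 * 4 ^ l ≤ D.ncard) := by
  intro l
  induction l with
  | zero => exact ⟨base_upper, fun D hD => base_lower D hD⟩
  | succ l ih =>
    obtain ⟨⟨D₀, hD₀, hcard₀⟩, hlow⟩ := ih
    constructor
    · refine ⟨Prod.snd ⁻¹' D₀, ?_, ?_⟩
      · rintro ⟨i, x⟩ hx
        have hx' : x ∉ D₀ := hx
        have h2 : 2 ≤ ((FCN l).neighborSet x ∩ D₀).ncard := hD₀ x hx'
        have hsub : Prod.mk i '' ((FCN l).neighborSet x ∩ D₀) ⊆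
            (FCN (l + 1)).neighborSet (i, x) ∩ Prod.snd ⁻¹' D₀ := by
          rintro _ ⟨y, ⟨hy1, hy2⟩, rfl⟩
          exact ⟨Or.inr ⟨rfl, hy1⟩, hy2⟩
        calc 2 ≤ ((FCN l).neighborSet x ∩ D₀).ncard := h2
          _ = (Prod.mk i '' ((FCN l).neighborSet x ∩ D₀)).ncard :=
            (Set.ncard_image_of_injective _ (mk_injective i)).symm
          _ ≤ _ := Set.ncard_le_ncard hsub (Set.toFinite _)
      · refine Eq.trans (slices (Prod.snd ⁻¹' D₀ : Set (Fin 4 × FCNVert l))) ?_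
        show D₀.ncard + D₀.ncard + D₀.ncard + D₀.ncard = 2 * 4 ^ (l + 1)
        rw [hcard₀]; ring
    · intro D hD
      have key : ∀ i : Fin 4, 2 * 4 ^ l ≤ {x | (i, x) ∈ D}.ncard := by
        intro i
        apply hlow
        intro x hx hxS
        have hxr : x ≠ fcnRoot l := fun h => hxS (Or.inl h)
        have hxa : x ≠ fcnAux l := fun h => hxS (Or.inr h)
        have hmem : ((i, x) : FCNVert (l + 1)) ∉
            ({fcnRoot (l + 1), fcnAux (l + 1)} : Set (FCNVert (l + 1))) := by
          rintro (h | h)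
          · exact hxa (congrArg Prod.snd h)
          · exact hxa (congrArg Prod.snd h)
        have h2 := hD (i, x) hx hmem
        have hN : (FCN (l + 1)).neighborSet (i, x) ∩ D =
            Prod.mk i '' ((FCN l).neighborSet x ∩ {x | (i, x) ∈ D}) := by
          rw [nbhd_copy hxr]
          ext ⟨j, y⟩
          constructor
          · rintro ⟨⟨z, hz, hzeq⟩, hmemD⟩
            injection hzeq with hj hy
            subst hj; subst hy
            exact ⟨z, ⟨hz, hmemD⟩, rfl⟩
          · rintro ⟨z, ⟨hz1, hz2⟩, hzeq⟩
            injection hzeq with hj hy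
            subst hj; subst hy
            exact ⟨⟨z, hz1, rfl⟩, hz2⟩
        rw [hN] at h2
        exact h2.trans_eq (Set.ncard_image_of_injective _ (mk_injective i))
      have h0 := key 0
      have h1 := key 1
      have h2 := key 2
      have h3 := key 3
      have hs : D.ncard = {x | ((0 : Fin 4), x) ∈ D}.ncard + {x | ((1 : Fin 4), x) ∈ D}.ncard
          + {x | ((2 : Fin 4), x) ∈ D}.ncard + {x | ((3 : Fin 4), x) ∈ D}.ncard :=
        slices (D : Set (Fin 4 × FCNVert l))
      have hpow : 2 * 4 ^ (l + 1) = 2 * 4 ^ l + 2 * 4 ^ l + 2 * 4 ^ l + 2 * 4 ^ l := by ring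
      omega

lemma gamma2_fcn (l : ℕ) : gamma2 (FCN l) = 2 * 4 ^ l := by
  obtain ⟨⟨D, hD, hcard⟩, hlow⟩ := fcn_main l
  refine le_antisymm (Nat.sInf_le ⟨D, hD, hcard⟩) ?_
  refine le_csInf ⟨2 * 4 ^ l, D, hD, hcard⟩ ?_
  rintro n ⟨E, hE, rfl⟩
  exact hlow E (fun u hu _ => hE u hu)

end Stmt19Aux

theorem stmt19 :
    gamma2 (FCN 0) = 2 ∧ ∀ l : ℕ, gamma2 (FCN (l + 1)) = 4 * gamma2 (FCN l) := by
  constructor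
  · simpa using gamma2_fcn 0
  · intro l
    rw [gamma2_fcn l, gamma2_fcn (l + 1)]
    ring
end
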